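/- arXiv:1010.0354 — 6 statements merged into one kernel-verified Lean document; each statement's English description precedes it below -/
import Mathlib

section
/- For differentiation D and multiplication X on smooth functions (or formal power series), the normal-ordered coefficient I^{(n)}_{ℓ,m} of X^ℓ D^m in (αX + βD)^n equals 0 if n - ℓ - m is odd, and equals n! / (2^{(n-ℓ-m)/2} · ((n-ℓ-m)/2)! · ℓ! · m!) · α^{(n+ℓ-m)/2} · β^{(n-ℓ+m)/2} if n - ℓ - m is even and nonnegative. -/
/-- The differentiation operator `D` on `ℝ[x]`. -/
noncomputable def Dop : Module.End ℝ (Polynomial ℝ) := Polynomial.derivative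

/-- The operator `X` of multiplication by `x` on `ℝ[x]`. -/
noncomputable def Xop : Module.End ℝ (Polynomial ℝ) := LinearMap.mulLeft ℝ (Polynomial.X)


lemma DX_comm : Dop * Xop = Xop * Dop + 1 := by
  apply LinearMap.ext
  intro p
  simp [Dop, Xop, Module.End.mul_apply, Polynomial.derivative_mul, add_comm]

lemma D_pow_X (ℓ : ℕ) : Dop * Xop ^ (ℓ+1) = Xop ^ (ℓ+1) * Dop + ((ℓ+1 : ℕ) : ℝ) • Xop ^ ℓ := by
  induction ℓ with
  | zero => simpa using DX_comm
  | succ ℓ ih =>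
    rw [pow_succ, ← mul_assoc, ih, add_mul, smul_mul_assoc, mul_assoc, DX_comm, mul_add,
      mul_one, ← mul_assoc, ← pow_succ, ← pow_succ]
    push_cast
    module

lemma A_mul (α β : ℝ) (ℓ m : ℕ) :
    (α • Xop + β • Dop) * (Xop ^ ℓ * Dop ^ m) =
      α • (Xop ^ (ℓ+1) * Dop ^ m) + β • (Xop ^ ℓ * Dop ^ (m+1)) +
        (β * ℓ) • (Xop ^ (ℓ-1) * Dop ^ m) := by
  cases ℓ with
  | zero =>
    simp only [pow_zero, one_mul, add_mul, smul_mul_assoc, Nat.cast_zero, mul_zero, zero_smul,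
      add_zero, zero_add, pow_one]
    simp [← pow_succ']
  | succ ℓ =>
    rw [add_mul, smul_mul_assoc, smul_mul_assoc, ← mul_assoc, ← mul_assoc, ← pow_succ',
      D_pow_X ℓ, add_mul, smul_mul_assoc, mul_assoc, ← pow_succ', smul_add, smul_smul,
      Nat.add_sub_cancel]
    push_cast
    module

noncomputable def Icoef (α β : ℝ) (n ℓ m : ℕ) : ℝ :=
  if ℓ + m ≤ n ∧ (n - (ℓ + m)) % 2 = 0 then
    (Nat.factorial n : ℝ) /
      (2 ^ ((n - (ℓ + m)) / 2) * (Nat.factorial ((n - (ℓ + m)) / 2) : ℝ) *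
        (Nat.factorial ℓ : ℝ) * (Nat.factorial m : ℝ)) *
      α ^ ((n + ℓ - m) / 2) * β ^ ((n + m - ℓ) / 2)
  else 0

lemma Icoef_vanish (α β : ℝ) {n ℓ m : ℕ} (h : n < ℓ + m) : Icoef α β n ℓ m = 0 :=
  if_neg (by omega)

lemma Icoef_odd (α β : ℝ) {n ℓ m : ℕ} (h : (n - (ℓ + m)) % 2 = 1) : Icoef α β n ℓ m = 0 :=
  if_neg (by omega)

lemma Icoef_eval (α β : ℝ) (ℓ m k : ℕ) :
    Icoef α β (ℓ + m + 2*k) ℓ m =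
      (Nat.factorial (ℓ+m+2*k) : ℝ) /
        (2^k * (Nat.factorial k : ℝ) * (Nat.factorial ℓ : ℝ) * (Nat.factorial m : ℝ)) *
        α^(ℓ+k) * β^(m+k) := by
  rw [Icoef, if_pos ⟨by omega, by omega⟩, show ℓ+m+2*k-(ℓ+m) = 2*k by omega,
    show 2*k/2 = k by omega, show (ℓ+m+2*k+ℓ-m)/2 = ℓ+k by omega,
    show (ℓ+m+2*k+m-ℓ)/2 = m+k by omega]

set_option maxHeartbeats 2000000 in
lemma Icoef_rec (α β : ℝ) (n ℓ m : ℕ) :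
    Icoef α β (n+1) ℓ m =
      (if ℓ = 0 then 0 else α * Icoef α β n (ℓ-1) m) +
      (if m = 0 then 0 else β * Icoef α β n ℓ (m-1)) +
      β * (ℓ+1) * Icoef α β n (ℓ+1) m := by
  by_cases h1 : ℓ + m ≤ n + 1
  · by_cases h2 : (n + 1 - (ℓ + m)) % 2 = 0
    · obtain ⟨k, hk⟩ : ∃ k, n + 1 = ℓ + m + 2*k := ⟨(n+1-(ℓ+m))/2, by omega⟩
      have fne : ∀ j : ℕ, (Nat.factorial j : ℝ) ≠ 0 := fun j =>
        Nat.cast_ne_zero.2 (Nat.factorial_ne_zero j)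
      have two : (2:ℝ) ≠ 0 := two_ne_zero
      rcases ℓ with _ | ℓ <;> rcases m with _ | m <;> rcases k with _ | k
      · omega
      · -- ℓ=0, m=0, k=k+1 : n = 2k+1
        rw [hk, Icoef_eval, if_pos rfl, if_pos rfl,
          show n = 1 + 0 + 2*k from by omega, Icoef_eval]
        rw [show (0:ℕ)+0+2*(k+1) = (1+0+2*k)+1 from by omega]
        simp only [Nat.factorial_succ, Nat.factorial_zero, Nat.factorial_one]
        push_cast
        field_simp
        ring
      · -- ℓ=0, m=m+1, k=0 : n = m
        rw [hk, Icoef_eval, if_pos rfl, if_neg (by omega), Nat.add_sub_cancel,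
          show n = 0 + m + 2*0 from by omega]
        have t3 : Icoef α β (0 + m + 2*0) (0+1) (m+1) = 0 := Icoef_vanish _ _ (by omega)
        rw [Icoef_eval, t3, show (0:ℕ)+(m+1)+2*0 = (0+m+2*0)+1 from by omega]
        simp only [Nat.factorial_succ, Nat.factorial_zero, Nat.factorial_one]
        push_cast
        field_simp
        ring
      · -- ℓ=0, m=m+1, k=k+1 : n = m + 2k + 2
        rw [hk, Icoef_eval, if_pos rfl, if_neg (by omega), Nat.add_sub_cancel]
        have e2 : Icoef α β n 0 m =
            (Nat.factorial (0+m+2*(k+1)) : ℝ) /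
              (2^(k+1) * (Nat.factorial (k+1) : ℝ) * (Nat.factorial 0 : ℝ) *
                (Nat.factorial m : ℝ)) * α^(0+(k+1)) * β^(m+(k+1)) := by
          rw [show n = 0 + m + 2*(k+1) from by omega, Icoef_eval]
        have e3 : Icoef α β n (0+1) (m+1) =
            (Nat.factorial (1+(m+1)+2*k) : ℝ) /
              (2^k * (Nat.factorial k : ℝ) * (Nat.factorial 1 : ℝ) *
                (Nat.factorial (m+1) : ℝ)) * α^(1+k) * β^((m+1)+k) := by
          rw [show n = 1 + (m+1) + 2*k from by omega]; exact Icoef_eval α β 1 (m+1) k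
        rw [e2, e3, show (0:ℕ)+(m+1)+2*(k+1) = (0+m+2*(k+1))+1 from by omega,
          show (1:ℕ)+(m+1)+2*k = 0+m+2*(k+1) from by omega]
        simp only [Nat.factorial_succ, Nat.factorial_zero, Nat.factorial_one]
        push_cast
        field_simp
        ring
      · -- ℓ=ℓ+1, m=0, k=0 : n = ℓ
        rw [hk, Icoef_eval, if_neg (by omega), if_pos rfl, Nat.add_sub_cancel]
        have t3 : Icoef α β n (ℓ+1+1) 0 = 0 := Icoef_vanish _ _ (by omega)
        rw [t3, show n = ℓ + 0 + 2*0 from by omega, Icoef_eval,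
          show (ℓ:ℕ)+1+0+2*0 = (ℓ+0+2*0)+1 from by omega]
        simp only [Nat.factorial_succ, Nat.factorial_zero, Nat.factorial_one]
        push_cast
        field_simp
        ring
      · -- ℓ=ℓ+1, m=0, k=k+1 : n = ℓ + 2k + 2
        rw [hk, Icoef_eval, if_neg (by omega), if_pos rfl, Nat.add_sub_cancel]
        have e1 : Icoef α β n ℓ 0 =
            (Nat.factorial (ℓ+0+2*(k+1)) : ℝ) /
              (2^(k+1) * (Nat.factorial (k+1) : ℝ) * (Nat.factorial ℓ : ℝ) *
                (Nat.factorial 0 : ℝ)) * α^(ℓ+(k+1)) * β^(0+(k+1)) := by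
          rw [show n = ℓ + 0 + 2*(k+1) from by omega]; exact Icoef_eval α β ℓ 0 (k+1)
        have e3 : Icoef α β n (ℓ+1+1) 0 =
            (Nat.factorial ((ℓ+2)+0+2*k) : ℝ) /
              (2^k * (Nat.factorial k : ℝ) * (Nat.factorial (ℓ+2) : ℝ) *
                (Nat.factorial 0 : ℝ)) * α^((ℓ+2)+k) * β^(0+k) := by
          rw [show n = (ℓ+2) + 0 + 2*k from by omega]; exact Icoef_eval α β (ℓ+2) 0 k
        rw [e1, e3, show (ℓ:ℕ)+1+0+2*(k+1) = (ℓ+0+2*(k+1))+1 from by omega,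
          show (ℓ:ℕ)+2+0+2*k = ℓ+0+2*(k+1) from by omega,
          show (ℓ:ℕ)+2 = (ℓ+1)+1 from by omega,
          Nat.factorial_succ]
        simp only [Nat.factorial_succ, Nat.factorial_zero, Nat.factorial_one]
        push_cast
        field_simp
        ring
      · -- ℓ=ℓ+1, m=m+1, k=0 : n = ℓ+m+1
        rw [hk, Icoef_eval, if_neg (by omega), if_neg (by omega), Nat.add_sub_cancel,
          Nat.add_sub_cancel]
        have t3 : Icoef α β n (ℓ+1+1) (m+1) = 0 := Icoef_vanish _ _ (by omega)
        have e1 : Icoef α β n ℓ (m+1) =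
            (Nat.factorial (ℓ+(m+1)+2*0) : ℝ) /
              (2^0 * (Nat.factorial 0 : ℝ) * (Nat.factorial ℓ : ℝ) *
                (Nat.factorial (m+1) : ℝ)) * α^(ℓ+0) * β^((m+1)+0) := by
          rw [show n = ℓ + (m+1) + 2*0 from by omega]; exact Icoef_eval α β ℓ (m+1) 0
        have e2 : Icoef α β n (ℓ+1) m =
            (Nat.factorial ((ℓ+1)+m+2*0) : ℝ) /
              (2^0 * (Nat.factorial 0 : ℝ) * (Nat.factorial (ℓ+1) : ℝ) *
                (Nat.factorial m : ℝ)) * α^((ℓ+1)+0) * β^(m+0) := by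
          rw [show n = (ℓ+1) + m + 2*0 from by omega]; exact Icoef_eval α β (ℓ+1) m 0
        rw [t3, e1, e2, show (ℓ:ℕ)+1+(m+1)+2*0 = (ℓ+(m+1)+2*0)+1 from by omega,
          show (ℓ:ℕ)+1+m+2*0 = ℓ+(m+1)+2*0 from by omega]
        simp only [Nat.factorial_succ, Nat.factorial_zero, Nat.factorial_one]
        push_cast
        field_simp
        ring
      · -- ℓ=ℓ+1, m=m+1, k=k+1 : n = ℓ+m+2k+3
        rw [hk, Icoef_eval, if_neg (by omega), if_neg (by omega), Nat.add_sub_cancel,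
          Nat.add_sub_cancel]
        have e1 : Icoef α β n ℓ (m+1) =
            (Nat.factorial (ℓ+(m+1)+2*(k+1)) : ℝ) /
              (2^(k+1) * (Nat.factorial (k+1) : ℝ) * (Nat.factorial ℓ : ℝ) *
                (Nat.factorial (m+1) : ℝ)) * α^(ℓ+(k+1)) * β^((m+1)+(k+1)) := by
          rw [show n = ℓ + (m+1) + 2*(k+1) from by omega]
          exact Icoef_eval α β ℓ (m+1) (k+1)
        have e2 : Icoef α β n (ℓ+1) m =
            (Nat.factorial ((ℓ+1)+m+2*(k+1)) : ℝ) /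
              (2^(k+1) * (Nat.factorial (k+1) : ℝ) * (Nat.factorial (ℓ+1) : ℝ) *
                (Nat.factorial m : ℝ)) * α^((ℓ+1)+(k+1)) * β^(m+(k+1)) := by
          rw [show n = (ℓ+1) + m + 2*(k+1) from by omega]
          exact Icoef_eval α β (ℓ+1) m (k+1)
        have e3 : Icoef α β n (ℓ+1+1) (m+1) =
            (Nat.factorial ((ℓ+2)+(m+1)+2*k) : ℝ) /
              (2^k * (Nat.factorial k : ℝ) * (Nat.factorial (ℓ+2) : ℝ) *
                (Nat.factorial (m+1) : ℝ)) * α^((ℓ+2)+k) * β^((m+1)+k) := by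
          rw [show n = (ℓ+2) + (m+1) + 2*k from by omega]
          exact Icoef_eval α β (ℓ+2) (m+1) k
        rw [e1, e2, e3,
          show (ℓ:ℕ)+1+(m+1)+2*(k+1) = (ℓ+(m+1)+2*(k+1))+1 from by omega,
          show (ℓ:ℕ)+1+m+2*(k+1) = ℓ+(m+1)+2*(k+1) from by omega,
          show (ℓ:ℕ)+2+(m+1)+2*k = ℓ+(m+1)+2*(k+1) from by omega,
          show (ℓ:ℕ)+2 = (ℓ+1)+1 from by omega]
        simp only [Nat.factorial_succ, Nat.factorial_zero, Nat.factorial_one]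
        push_cast
        field_simp
        ring
    · -- odd case
      have t3 : Icoef α β n (ℓ+1) m = 0 := by
        rcases le_or_gt (ℓ+1+m) n with h | h
        · exact Icoef_odd _ _ (by omega)
        · exact Icoef_vanish _ _ h
      have t1 : (if ℓ = 0 then (0:ℝ) else α * Icoef α β n (ℓ-1) m) = 0 := by
        rcases Nat.eq_zero_or_pos ℓ with h | h
        · rw [if_pos h]
        · rw [if_neg (by omega), Icoef_odd _ _ (by omega), mul_zero]
      have t2 : (if m = 0 then (0:ℝ) else β * Icoef α β n ℓ (m-1)) = 0 := by
        rcases Nat.eq_zero_or_pos m with h | h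
        · rw [if_pos h]
        · rw [if_neg (by omega), Icoef_odd _ _ (by omega), mul_zero]
      rw [t1, t2, t3, Icoef_odd _ _ (by omega), mul_zero]
      ring
  · -- out of range
    have t3 : Icoef α β n (ℓ+1) m = 0 := Icoef_vanish _ _ (by omega)
    have t1 : (if ℓ = 0 then (0:ℝ) else α * Icoef α β n (ℓ-1) m) = 0 := by
      rcases Nat.eq_zero_or_pos ℓ with h | h
      · rw [if_pos h]
      · rw [if_neg (by omega), Icoef_vanish _ _ (by omega), mul_zero]
    have t2 : (if m = 0 then (0:ℝ) else β * Icoef α β n ℓ (m-1)) = 0 := by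
      rcases Nat.eq_zero_or_pos m with h | h
      · rw [if_pos h]
      · rw [if_neg (by omega), Icoef_vanish _ _ (by omega), mul_zero]
    rw [t1, t2, t3, Icoef_vanish _ _ (by omega), mul_zero]
    ring

set_option maxHeartbeats 1000000 in
theorem key (α β : ℝ) (n : ℕ) :
    (α • Xop + β • Dop) ^ n =
      ∑ ℓ ∈ Finset.range (n + 1), ∑ m ∈ Finset.range (n + 1),
        Icoef α β n ℓ m • (Xop ^ ℓ * Dop ^ m) := by
  induction n with
  | zero =>
    have h1 : Icoef α β 0 0 0 = 1 := by
      have := Icoef_eval α β 0 0 0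
      norm_num [Nat.factorial] at this
      simpa using this
    simp [h1]
  | succ n ih =>
    rw [pow_succ', ih, Finset.mul_sum]
    simp only [Finset.mul_sum, mul_smul_comm, A_mul, smul_add, Finset.sum_add_distrib]
    have hrec : (∑ ℓ ∈ Finset.range (n+2), ∑ m ∈ Finset.range (n+2),
        Icoef α β (n+1) ℓ m • (Xop ^ ℓ * Dop ^ m)) =
        (∑ ℓ ∈ Finset.range (n+2), ∑ m ∈ Finset.range (n+2),
          (if ℓ = 0 then (0:ℝ) else α * Icoef α β n (ℓ-1) m) • (Xop ^ ℓ * Dop ^ m)) +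
        (∑ ℓ ∈ Finset.range (n+2), ∑ m ∈ Finset.range (n+2),
          (if m = 0 then (0:ℝ) else β * Icoef α β n ℓ (m-1)) • (Xop ^ ℓ * Dop ^ m)) +
        (∑ ℓ ∈ Finset.range (n+2), ∑ m ∈ Finset.range (n+2),
          (β * (ℓ+1) * Icoef α β n (ℓ+1) m) • (Xop ^ ℓ * Dop ^ m)) := by
      rw [← Finset.sum_add_distrib, ← Finset.sum_add_distrib]
      refine Finset.sum_congr rfl fun ℓ _ => ?_
      rw [← Finset.sum_add_distrib, ← Finset.sum_add_distrib]
      refine Finset.sum_congr rfl fun m _ => ?_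
      rw [Icoef_rec, add_smul, add_smul]
    have hT1 : (∑ ℓ ∈ Finset.range (n+1), ∑ m ∈ Finset.range (n+1),
        Icoef α β n ℓ m • α • (Xop ^ (ℓ+1) * Dop ^ m)) =
        ∑ ℓ ∈ Finset.range (n+2), ∑ m ∈ Finset.range (n+2),
          (if ℓ = 0 then (0:ℝ) else α * Icoef α β n (ℓ-1) m) • (Xop ^ ℓ * Dop ^ m) := by
        conv_rhs => rw [Finset.sum_range_succ']
        have f0 : (∑ m ∈ Finset.range (n+2),
            (if (0:ℕ) = 0 then (0:ℝ) else α * Icoef α β n (0-1) m) • (Xop^0 * Dop^m)) = 0 := by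
          simp
        rw [f0, add_zero]
        refine Finset.sum_congr rfl fun ℓ _ => ?_
        conv_rhs => rw [Finset.sum_range_succ]
        have last : (if ℓ+1 = 0 then (0:ℝ) else α * Icoef α β n (ℓ+1-1) (n+1)) •
            (Xop^(ℓ+1) * Dop^(n+1)) = 0 := by
          rw [if_neg (Nat.succ_ne_zero ℓ), Nat.add_sub_cancel,
            Icoef_vanish _ _ (by omega), mul_zero, zero_smul]
        rw [last, add_zero]
        refine Finset.sum_congr rfl fun m hm => ?_
        rw [if_neg (Nat.succ_ne_zero ℓ), Nat.add_sub_cancel, smul_smul, mul_comm]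
    have hT2 : (∑ ℓ ∈ Finset.range (n+1), ∑ m ∈ Finset.range (n+1),
        Icoef α β n ℓ m • β • (Xop ^ ℓ * Dop ^ (m+1))) =
        ∑ ℓ ∈ Finset.range (n+2), ∑ m ∈ Finset.range (n+2),
          (if m = 0 then (0:ℝ) else β * Icoef α β n ℓ (m-1)) • (Xop ^ ℓ * Dop ^ m) := by
        conv_rhs => rw [Finset.sum_range_succ]
        have zB : (∑ m ∈ Finset.range (n+2),
            (if m = 0 then (0:ℝ) else β * Icoef α β n (n+1) (m-1)) •
              (Xop^(n+1) * Dop^m)) = 0 := by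
          refine Finset.sum_eq_zero fun m _ => ?_
          rcases Nat.eq_zero_or_pos m with h|h
          · simp [h]
          · rw [if_neg (by omega), Icoef_vanish _ _ (by omega), mul_zero, zero_smul]
        rw [zB, add_zero]
        refine Finset.sum_congr rfl fun ℓ _ => ?_
        conv_rhs => rw [Finset.sum_range_succ']
        have g0 : (if (0:ℕ) = 0 then (0:ℝ) else β * Icoef α β n ℓ (0-1)) •
            (Xop^ℓ * Dop^0) = 0 := by simp
        rw [g0, add_zero]
        refine Finset.sum_congr rfl fun m hm => ?_
        rw [if_neg (Nat.succ_ne_zero m), Nat.add_sub_cancel, smul_smul, mul_comm]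
    have hT3 : (∑ ℓ ∈ Finset.range (n+1), ∑ m ∈ Finset.range (n+1),
        Icoef α β n ℓ m • (β * (ℓ:ℝ)) • (Xop ^ (ℓ-1) * Dop ^ m)) =
        ∑ ℓ ∈ Finset.range (n+2), ∑ m ∈ Finset.range (n+2),
          (β * ((ℓ:ℝ)+1) * Icoef α β n (ℓ+1) m) • (Xop ^ ℓ * Dop ^ m) := by
      conv_lhs => rw [Finset.sum_range_succ']
      have f0 : (∑ m ∈ Finset.range (n+1),
          Icoef α β n 0 m • (β * ((0:ℕ):ℝ)) • (Xop^(0-1) * Dop^m)) = 0 := by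
        simp
      rw [f0, add_zero]
      conv_rhs => rw [Finset.sum_range_succ, Finset.sum_range_succ]
      have zn : (∑ m ∈ Finset.range (n+2),
          (β * (((n+1):ℕ)+1) * Icoef α β n (n+1+1) m) • (Xop^(n+1) * Dop^m)) = 0 := by
        refine Finset.sum_eq_zero fun m _ => ?_
        rw [Icoef_vanish _ _ (by omega), mul_zero, zero_smul]
      have zn' : (∑ m ∈ Finset.range (n+2),
          (β * ((n:ℕ)+1) * Icoef α β n (n+1) m) • (Xop^n * Dop^m)) = 0 := by
        refine Finset.sum_eq_zero fun m _ => ?_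
        rw [Icoef_vanish _ _ (by omega), mul_zero, zero_smul]
      rw [zn, zn', add_zero, add_zero]
      refine Finset.sum_congr rfl fun ℓ hℓ => ?_
      conv_rhs => rw [Finset.sum_range_succ]
      have last : (β * ((ℓ:ℝ)+1) * Icoef α β n (ℓ+1) (n+1)) • (Xop^ℓ * Dop^(n+1)) = 0 := by
        rw [Icoef_vanish _ _ (by omega), mul_zero, zero_smul]
      rw [last, add_zero]
      refine Finset.sum_congr rfl fun m hm => ?_
      rw [Nat.add_sub_cancel, smul_smul]
      congr 1
      push_cast
      ring
    rw [show n+1+1 = n+2 from rfl, hrec, ← hT1, ← hT2, ← hT3]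

/-- **Normal form of `(αX + βD)^n`.** The coefficient `I⁽ⁿ⁾_{ℓ,m}` of `X^ℓ D^m` in the
normal ordering of `(αX + βD)^n` equals `0` if `n - ℓ - m` is odd (or negative), and equals
`n! / (2^{(n-ℓ-m)/2} ((n-ℓ-m)/2)! ℓ! m!) · α^{(n+ℓ-m)/2} β^{(n-ℓ+m)/2}` if `n - ℓ - m` is
even and nonnegative. -/
theorem normal_form_linear (α β : ℝ) (n : ℕ) :
    (α • Xop + β • Dop) ^ n =
      ∑ ℓ ∈ Finset.range (n + 1), ∑ m ∈ Finset.range (n + 1),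
        (if ℓ + m ≤ n ∧ (n - (ℓ + m)) % 2 = 0 then
            (Nat.factorial n : ℝ) /
              (2 ^ ((n - (ℓ + m)) / 2) * (Nat.factorial ((n - (ℓ + m)) / 2) : ℝ) *
                (Nat.factorial ℓ : ℝ) * (Nat.factorial m : ℝ)) *
              α ^ ((n + ℓ - m) / 2) * β ^ ((n + m - ℓ) / 2)
          else 0) • (Xop ^ ℓ * Dop ^ m) := by
  simpa only [Icoef] using key α β n
end

section
/- The generalized Stirling numbers S_{2,2}(n,k), defined by (X²D²)^n = ∑_k S_{2,2}(n,k) X^k D^k in the Weyl algebra, satisfy S_{2,2}(n,k) = (1/k!) · ∑_{j=2}^{k} (-1)^{k-j} C(k,j) [j(j-1)]^n for n ≥ 1. -/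
open Polynomial Finset

lemma Dpow (k : ℕ) (p : ℝ[X]) : (Dop ^ k) p = derivative^[k] p := by
  induction k with
  | zero => simp
  | succ k ih =>
    rw [pow_succ', Module.End.mul_apply, ih, Function.iterate_succ_apply']; rfl

lemma Xpow (k : ℕ) (p : ℝ[X]) : (Xop ^ k) p = X ^ k * p := by
  induction k with
  | zero => simp
  | succ k ih =>
    rw [pow_succ', Module.End.mul_apply, ih]
    show X * (X ^ k * p) = _
    rw [pow_succ]; ring

lemma XDk (k m : ℕ) : (Xop ^ k * Dop ^ k) (X ^ m : ℝ[X]) = (m.descFactorial k : ℝ) • X ^ m := by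
  rw [Module.End.mul_apply, Dpow, iterate_derivative_X_pow_eq_smul, Xpow, mul_smul_comm]
  rcases le_or_gt k m with h | h
  · rw [← pow_add, Nat.add_sub_cancel' h]
  · rw [Nat.descFactorial_eq_zero_iff_lt.2 h]; simp

lemma X2D2pow (n m : ℕ) : ((Xop ^ 2 * Dop ^ 2) ^ n) (X ^ m : ℝ[X])
    = ((m.descFactorial 2 : ℝ)) ^ n • X ^ m := by
  induction n with
  | zero => simp
  | succ n ih =>
    rw [pow_succ, Module.End.mul_apply, XDk, map_smul, ih, smul_smul, pow_succ]
    ring_nf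

lemma keyeq (S : ℕ → ℕ → ℝ)
    (hS : ∀ n : ℕ, (Xop ^ 2 * Dop ^ 2) ^ n =
      ∑ k ∈ Finset.range (2 * n + 1), S n k • (Xop ^ k * Dop ^ k)) (n m : ℕ) :
    ((m.descFactorial 2 : ℝ)) ^ n
      = ∑ k ∈ range (2*n+1), S n k * (m.descFactorial k : ℝ) := by
  have h := congrArg (fun f : Module.End ℝ (Polynomial ℝ) => ((f (X^m)).coeff m)) (hS n)
  simp only [LinearMap.sum_apply, LinearMap.smul_apply] at h
  rw [X2D2pow] at h
  simp only [XDk, smul_smul, finset_sum_coeff, coeff_smul, coeff_X_pow, if_pos rfl,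
    smul_eq_mul, mul_one] at h
  simpa using h

lemma altsum (m : ℕ) : ∑ t ∈ range (m+1), (-1:ℝ)^t * (m.choose t)
    = if m = 0 then 1 else 0 := by
  have h := add_pow (-1:ℝ) 1 m
  simp only [one_pow, mul_one, neg_add_cancel] at h
  rw [← h, zero_pow_eq]

lemma inner_eval (g : ℕ → ℝ) (k j : ℕ) (hj : j ≤ k) :
    ∑ i ∈ range (k+1), (k.choose i : ℝ) * ((-1:ℝ)^(i-j) * (i.choose j) * g j)
      = if j = k then g k else 0 := by
  have h1 : ∑ i ∈ range (k+1), (k.choose i : ℝ) * ((-1:ℝ)^(i-j) * (i.choose j) * g j)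
      = ∑ i ∈ Ico j (k+1), (k.choose i : ℝ) * ((-1:ℝ)^(i-j) * (i.choose j) * g j) := by
    refine (Finset.sum_subset ?_ ?_).symm
    · intro i hi; simp only [mem_Ico] at hi; exact mem_range.2 hi.2
    · intro i hi hni
      simp only [mem_range, mem_Ico, not_and, not_lt] at hi hni
      rw [Nat.choose_eq_zero_of_lt (lt_of_not_ge fun h => absurd (hni h) (not_le.2 hi))]
      simp
  rw [h1, Finset.sum_Ico_eq_sum_range]
  have h2 : ∀ t ∈ range (k + 1 - j), (k.choose (j+t) : ℝ) * ((-1:ℝ)^(j+t-j) * ((j+t).choose j) * g j)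
      = ((k.choose j : ℝ) * g j) * ((-1:ℝ)^t * ((k-j).choose t)) := by
    intro t ht
    rw [mem_range] at ht
    have htk : j + t ≤ k := by omega
    have hc : k.choose (j+t) * ((j+t).choose j) = k.choose j * (k-j).choose (j+t-j) :=
      Nat.choose_mul (Nat.le_add_right j t)
    rw [Nat.add_sub_cancel_left] at hc ⊢
    have hc' : ((k.choose (j+t)) : ℝ) * ((j+t).choose j) = (k.choose j : ℝ) * ((k-j).choose t) := by
      exact_mod_cast congrArg (Nat.cast (R := ℝ)) hc
    linear_combination (g j * (-1:ℝ)^t) * hc'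
  rw [Finset.sum_congr rfl h2, ← Finset.mul_sum]
  have : k + 1 - j = (k - j) + 1 := by omega
  rw [this, altsum]
  rcases eq_or_ne j k with rfl | hne
  · simp
  · have : k - j ≠ 0 := by omega
    simp [this, hne]

lemma inv_id (g : ℕ → ℝ) (k : ℕ) :
    ∑ i ∈ range (k+1), (k.choose i : ℝ) *
      (∑ j ∈ range (i+1), (-1:ℝ)^(i-j) * (i.choose j) * g j) = g k := by
  have h1 : ∀ i ∈ range (k+1),
      (k.choose i : ℝ) * (∑ j ∈ range (i+1), (-1:ℝ)^(i-j) * (i.choose j) * g j)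
      = ∑ j ∈ range (k+1), (k.choose i : ℝ) * ((-1:ℝ)^(i-j) * (i.choose j) * g j) := by
    intro i hi
    rw [mem_range] at hi
    rw [Finset.mul_sum]
    refine Finset.sum_subset (by intro x hx; rw [mem_range] at *; omega) ?_
    intro j hj hnj
    rw [mem_range, Nat.lt_succ_iff] at hj hnj
    rw [Nat.choose_eq_zero_of_lt (by omega : i < j)]
    simp
  rw [Finset.sum_congr rfl h1, Finset.sum_comm]
  have h2 : ∀ j ∈ range (k+1),
      ∑ i ∈ range (k+1), (k.choose i : ℝ) * ((-1:ℝ)^(i-j) * (i.choose j) * g j)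
      = if j = k then g k else 0 := fun j hj =>
    inner_eval g k j (Nat.lt_succ_iff.1 (mem_range.1 hj))
  rw [Finset.sum_congr rfl h2, Finset.sum_ite_eq' (range (k+1)) k]
  simp

/-- **Generalized Stirling numbers for `(X²D²)^n`.** If `S n k` are the coefficients of the
normal ordering `(X²D²)^n = ∑_k S(n,k) X^k D^k` (as operators on polynomials), then for
`n ≥ 1` and `k ≤ 2n` one has
`S_{2,2}(n,k) = (1/k!) ∑_{j=2}^{k} (-1)^{k-j} C(k,j) [j(j-1)]^n`. -/
theorem generalized_stirling_formula (S : ℕ → ℕ → ℝ)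
    (hS : ∀ n : ℕ, (Xop ^ 2 * Dop ^ 2) ^ n =
      ∑ k ∈ Finset.range (2 * n + 1), S n k • (Xop ^ k * Dop ^ k))
    (n k : ℕ) (hn : 1 ≤ n) (hk : k ≤ 2 * n) :
    S n k = (1 / (Nat.factorial k : ℝ)) *
      ∑ j ∈ Finset.Icc 2 k,
        (-1 : ℝ) ^ (k - j) * (Nat.choose k j : ℝ) * ((j : ℝ) * ((j : ℝ) - 1)) ^ n := by
  set g : ℕ → ℝ := fun j => ((j : ℝ) * ((j : ℝ) - 1)) ^ n with hg
  have hn0 : n ≠ 0 := by omega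
  have hgd : ∀ m : ℕ, ((m.descFactorial 2 : ℝ)) ^ n = g m := by
    intro m
    cases m with
    | zero => simp [hg, zero_pow hn0]
    | succ s =>
      have hd : (s+1).descFactorial 2 = s * ((s+1) * 1) := rfl
      rw [hd, hg]; push_cast; ring_nf
  have key : ∀ m : ℕ, g m = ∑ k' ∈ range (2*n+1), S n k' * (m.descFactorial k' : ℝ) :=
    fun m => (hgd m).symm.trans (keyeq S hS n m)
  have hIcc : ∀ k' : ℕ, ∑ j ∈ Finset.Icc 2 k', (-1:ℝ)^(k'-j) * (k'.choose j) * g j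
      = ∑ j ∈ range (k'+1), (-1:ℝ)^(k'-j) * (k'.choose j) * g j := by
    intro k'
    refine Finset.sum_subset ?_ ?_
    · intro j hj; rw [mem_Icc] at hj; rw [mem_range]; omega
    · intro j hj hnj
      rw [mem_range] at hj
      rw [mem_Icc, not_and, not_le] at hnj
      have hj2 : j < 2 := by by_contra h; exact absurd (hnj (by omega)) (by omega)
      interval_cases j <;> simp [hg, zero_pow hn0]
  revert hk
  induction k using Nat.strong_induction_on with
  | _ k IH =>
    intro hk
    have hfac : (k.factorial : ℝ) ≠ 0 := Nat.cast_ne_zero.2 k.factorial_ne_zero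
    have e1 : g k = (∑ k' ∈ range k, S n k' * (k.descFactorial k' : ℝ))
        + S n k * (k.factorial : ℝ) := by
      rw [key k]
      rw [show (∑ k' ∈ range (2*n+1), S n k' * (k.descFactorial k' : ℝ))
          = ∑ k' ∈ range (k+1), S n k' * (k.descFactorial k' : ℝ) from ?_]
      · rw [Finset.sum_range_succ, Nat.descFactorial_self]
      · refine (Finset.sum_subset (by intro x hx; rw [mem_range] at *; omega) ?_).symm
        intro k' h1 h2
        simp only [mem_range, not_lt] at h1 h2
        rw [Nat.descFactorial_eq_zero_iff_lt.2 (by omega)]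
        simp
    have e2 : ∀ k' ∈ range k, S n k' * (k.descFactorial k' : ℝ)
        = (k.choose k' : ℝ) * ∑ j ∈ range (k'+1), (-1:ℝ)^(k'-j) * (k'.choose j) * g j := by
      intro k' hk'
      rw [mem_range] at hk'
      have hf' : (k'.factorial : ℝ) ≠ 0 := Nat.cast_ne_zero.2 k'.factorial_ne_zero
      rw [IH k' hk' (by omega), ← hIcc k', Nat.descFactorial_eq_factorial_mul_choose]
      push_cast
      field_simp
      ring
    have e3 := inv_id g k
    rw [Finset.sum_range_succ, Nat.choose_self, Nat.cast_one, one_mul] at e3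
    rw [Finset.sum_congr rfl e2] at e1
    have e4 : S n k * (k.factorial : ℝ)
        = ∑ j ∈ range (k+1), (-1:ℝ)^(k-j) * (k.choose j) * g j := by linarith
    rw [← hIcc k] at e4
    rw [show (∑ j ∈ Finset.Icc 2 k,
        (-1 : ℝ) ^ (k - j) * (Nat.choose k j : ℝ) * ((j : ℝ) * ((j : ℝ) - 1)) ^ n)
        = ∑ j ∈ Finset.Icc 2 k, (-1:ℝ)^(k-j) * (k.choose j) * g j from rfl]
    rw [← e4]
    field_simp
end

section
/- The generalized Bell numbers B_{2,2}(n) := ∑_k S_{2,2}(n,k) satisfy the Dobiński-type formula B_{2,2}(n) = e^{-1} · ∑_{ℓ=2}^{∞} [ℓ(ℓ-1)]^n / ℓ! for n ≥ 1. -/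
open Polynomial in
lemma opk (k m : ℕ) : (Xop ^ k * Dop ^ k) ((X : ℝ[X]) ^ m)
    = (m.descFactorial k : ℝ) • (X : ℝ[X]) ^ m := by
  have hD : (Dop ^ k) ((X : ℝ[X]) ^ m) = (m.descFactorial k : ℝ) • (X : ℝ[X]) ^ (m - k) := by
    rw [Dop, Module.End.pow_apply]
    exact Polynomial.iterate_derivative_X_pow_eq_smul m k
  rw [Module.End.mul_apply, hD, Xop, LinearMap.pow_mulLeft, LinearMap.mulLeft_apply,
    mul_smul_comm, ← pow_add]
  rcases le_or_gt k m with h | h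
  · rw [Nat.add_sub_cancel' h]
  · rw [Nat.descFactorial_eq_zero_iff_lt.2 h]
    simp

open Polynomial in
lemma powapp (n m : ℕ) : ((Xop ^ 2 * Dop ^ 2) ^ n) ((X : ℝ[X]) ^ m)
    = ((m.descFactorial 2 : ℝ)) ^ n • (X : ℝ[X]) ^ m := by
  induction n with
  | zero => simp
  | succ n ih =>
    rw [pow_succ, Module.End.mul_apply, opk 2 m, map_smul, ih, smul_smul, ← pow_succ']

lemma keyE (S : ℕ → ℕ → ℝ)
    (hS : ∀ n : ℕ, (Xop ^ 2 * Dop ^ 2) ^ n =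
      ∑ k ∈ Finset.range (2 * n + 1), S n k • (Xop ^ k * Dop ^ k))
    (n m : ℕ) :
    ((m.descFactorial 2 : ℝ)) ^ n
      = ∑ k ∈ Finset.range (2 * n + 1), S n k * (m.descFactorial k : ℝ) := by
  have h := congrArg (fun T : Module.End ℝ (Polynomial ℝ) =>
    Polynomial.coeff (T ((Polynomial.X : Polynomial ℝ) ^ m)) m) (hS n)
  simp only [powapp, LinearMap.sum_apply, LinearMap.smul_apply, opk,
    Polynomial.finset_sum_coeff, Polynomial.coeff_smul, Polynomial.coeff_X_pow_self,
    smul_eq_mul, mul_one] at h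
  exact h

noncomputable def g (k ℓ : ℕ) : ℝ :=
  (Nat.descFactorial (ℓ + 2) k : ℝ) / (Nat.factorial (ℓ + 2) : ℝ)

lemma gval {k m : ℕ} (h : k ≤ m) :
    (Nat.descFactorial m k : ℝ) / (Nat.factorial m : ℝ)
      = 1 / (Nat.factorial (m - k) : ℝ) := by
  rw [div_eq_div_iff (by positivity) (by positivity), one_mul]
  have h2 : m.descFactorial k * (m - k).factorial = m.factorial := by
    rw [Nat.mul_comm]; exact Nat.factorial_mul_descFactorial h
  exact_mod_cast h2

lemma fact_summable : Summable (fun i : ℕ => (1 : ℝ) / (Nat.factorial i : ℝ)) := by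
  simpa using Real.summable_pow_div_factorial 1

lemma exp_one_tsum : ∑' i : ℕ, (1 : ℝ) / (Nat.factorial i : ℝ) = Real.exp 1 := by
  rw [Real.exp_eq_exp_ℝ, NormedSpace.exp_eq_tsum_div]
  simp

lemma g_summable (k : ℕ) : Summable (g k) := by
  rw [← summable_nat_add_iff k]
  have : ∀ i : ℕ, g k (i + k) = 1 / (Nat.factorial (i + 2) : ℝ) := by
    intro i
    unfold g
    rw [gval (by omega), show i + k + 2 - k = i + 2 by omega]
  rw [summable_congr this]
  exact (summable_nat_add_iff 2).2 fact_summable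

lemma g_tsum (k : ℕ) (hk : 2 ≤ k) : ∑' ℓ, g k ℓ = Real.exp 1 := by
  obtain ⟨j, rfl⟩ := Nat.exists_eq_add_of_le hk
  have hsum : Summable (g (2 + j)) := g_summable _
  rw [← Summable.sum_add_tsum_nat_add j hsum]
  have h1 : ∀ ℓ ∈ Finset.range j, g (2 + j) ℓ = 0 := by
    intro ℓ hℓ
    simp only [Finset.mem_range] at hℓ
    unfold g
    rw [Nat.descFactorial_eq_zero_iff_lt.2 (by omega)]
    simp
  rw [Finset.sum_congr rfl h1, Finset.sum_const_zero, zero_add]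
  have h2 : ∀ i : ℕ, g (2 + j) (i + j) = 1 / (Nat.factorial i : ℝ) := by
    intro i
    unfold g
    rw [gval (by omega), show i + j + 2 - (2 + j) = i by omega]
  rw [tsum_congr h2, exp_one_tsum]

/-- **Dobiński-type formula for the generalized Bell numbers.** If `S n k` are the
coefficients in the normal ordering `(X²D²)^n = ∑_k S(n,k) X^k D^k` of operators on
polynomials, then the generalized Bell numbers `B_{2,2}(n) = ∑_k S(n,k)` satisfy, for
`n ≥ 1`, `B_{2,2}(n) = e⁻¹ · ∑_{ℓ=2}^{∞} [ℓ(ℓ-1)]^n / ℓ!`. -/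
theorem generalized_bell_dobinski (S : ℕ → ℕ → ℝ)
    (hS : ∀ n : ℕ, (Xop ^ 2 * Dop ^ 2) ^ n =
      ∑ k ∈ Finset.range (2 * n + 1), S n k • (Xop ^ k * Dop ^ k))
    (n : ℕ) (hn : 1 ≤ n) :
    ∑ k ∈ Finset.range (2 * n + 1), S n k =
      Real.exp (-1) *
        ∑' ℓ : ℕ, (((ℓ : ℝ) + 2) * ((ℓ : ℝ) + 1)) ^ n / (Nat.factorial (ℓ + 2) : ℝ) := by
  -- S n 0 = 0
  have hS0 : S n 0 = 0 := by
    have h := keyE S hS n 0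
    rw [show (Nat.descFactorial 0 2 : ℝ) = 0 by simp, zero_pow (by omega),
      Finset.sum_eq_single 0 (fun k _ hk => by
        rw [Nat.descFactorial_eq_zero_iff_lt.2 (by omega)]; simp)
      (fun h => absurd (Finset.mem_range.2 (by omega)) h)] at h
    simpa using h.symm
  -- S n 1 = 0
  have hS1 : S n 1 = 0 := by
    have h := keyE S hS n 1
    rw [show (Nat.descFactorial 1 2 : ℝ) = 0 by simp [Nat.descFactorial], zero_pow (by omega),
      ← Finset.sum_subset (Finset.range_subset_range.2 (show 2 ≤ 2 * n + 1 by omega))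
        (fun k _ hk => by
          simp only [Finset.mem_range, not_lt] at hk
          rw [Nat.descFactorial_eq_zero_iff_lt.2 (by omega)]; simp)] at h
    rw [Finset.sum_range_succ, Finset.sum_range_one] at h
    simp only [Nat.descFactorial_zero, Nat.descFactorial_one, Nat.cast_one, mul_one] at h
    rw [hS0] at h
    linarith
  -- rewrite each term of the tsum
  have hterm : ∀ ℓ : ℕ, (((ℓ : ℝ) + 2) * ((ℓ : ℝ) + 1)) ^ n / (Nat.factorial (ℓ + 2) : ℝ)
      = ∑ k ∈ Finset.range (2 * n + 1), S n k * g k ℓ := by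
    intro ℓ
    have hd : ((ℓ : ℝ) + 2) * ((ℓ : ℝ) + 1) = (Nat.descFactorial (ℓ + 2) 2 : ℝ) := by
      simp [Nat.descFactorial]
      ring
    rw [hd, keyE S hS n (ℓ + 2), Finset.sum_div]
    exact Finset.sum_congr rfl fun k _ => by rw [mul_div_assoc]; rfl
  rw [tsum_congr hterm,
    Summable.tsum_finsetSum (fun k _ => (g_summable k).mul_left (S n k))]
  have : ∀ k ∈ Finset.range (2 * n + 1), ∑' ℓ, S n k * g k ℓ = S n k * Real.exp 1 := by
    intro k _
    rw [tsum_mul_left]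
    rcases lt_or_ge k 2 with hk | hk
    · interval_cases k <;> simp [hS0, hS1]
    · rw [g_tsum k hk]
  rw [Finset.sum_congr rfl this, ← Finset.sum_mul, ← mul_assoc, mul_comm (Real.exp (-1)),
    mul_assoc, ← Real.exp_add]
  simp
end

section
/- The generalized Stirling numbers satisfy S_{2,2}(n,k) = ∑_{r=0}^{n} (-1)^{n-r} C(n,r) S(n+r, k), where S denotes ordinary Stirling numbers of the second kind. -/
/-- The Stirling number of the second kind `S(n,k)`: the number of partitions of an
`n`-element set into exactly `k` nonempty blocks. -/
noncomputable def stirling2 (n k : ℕ) : ℕ :=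
  Nat.card {P : Finpartition (Finset.univ : Finset (Fin n)) // P.parts.card = k}

open Finset Function

noncomputable def surjCard (m k : ℕ) : ℕ :=
  Fintype.card {f : Fin m → Fin k // Function.Surjective f}

noncomputable def imageRestrictEquiv (m k : ℕ) (s : Finset (Fin k)) :
    {f : Fin m → Fin k // Finset.univ.image f = s} ≃
      {g : Fin m → Fin s.card // Function.Surjective g} := by
  classical
  have e : Fin s.card ≃ {x // x ∈ s} := (Fintype.equivFinOfCardEq (Fintype.card_coe s)).symm
  refine
  { toFun := fun f => ⟨fun x => e.symm ⟨f.1 x, by have h : f.1 x ∈ Finset.univ.image f.1 := mem_image_of_mem _ (mem_univ x); rwa [f.2] at h⟩,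
      fun i => by
        have : (e i : Fin k) ∈ s := (e i).2
        have h2 : (e i : Fin k) ∈ Finset.univ.image f.1 := by rw [f.2]; exact this
        rw [mem_image] at h2
        obtain ⟨x, -, hx⟩ := h2
        exact ⟨x, by simp [hx]⟩⟩
    invFun := fun g => ⟨fun x => (e (g.1 x) : Fin k), ?_⟩
    left_inv := fun f => ?_
    right_inv := fun g => ?_ }
  · ext a
    simp only [mem_image, mem_univ, true_and]
    constructor
    · rintro ⟨x, rfl⟩; exact (e (g.1 x)).2
    · intro ha
      obtain ⟨x, hx⟩ := g.2 (e.symm ⟨a, ha⟩)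
      exact ⟨x, by simp [hx]⟩
  · ext x; simp
  · ext x; simp

theorem card_image_fiber (m k : ℕ) (s : Finset (Fin k)) :
    Fintype.card {f : Fin m → Fin k // Finset.univ.image f = s} = surjCard m s.card := by
  rw [surjCard, Fintype.card_congr (imageRestrictEquiv m k s)]

theorem sum_choose_surjCard (m k : ℕ) :
    ∑ j ∈ range (k + 1), k.choose j * surjCard m j = k ^ m := by
  classical
  have h1 : (Fintype.card (Fin m → Fin k)) = ∑ s : Finset (Fin k),
      Fintype.card {f : Fin m → Fin k // Finset.univ.image f = s} := by
    rw [← Fintype.card_sigma]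
    exact Fintype.card_congr (Equiv.sigmaFiberEquiv (fun f : Fin m → Fin k => Finset.univ.image f)).symm
  simp only [card_image_fiber] at h1
  rw [Fintype.card_fun, Fintype.card_fin, Fintype.card_fin] at h1
  rw [h1, ← Finset.powerset_univ, Finset.sum_powerset_apply_card (surjCard m)]
  simp [Finset.card_univ]

theorem alt_sum_choose_real (M : ℕ) :
    ∑ t ∈ range (M + 1), (-1 : ℝ) ^ (M - t) * (M.choose t : ℝ) =
      if M = 0 then 1 else 0 := by
  have h := Int.alternating_sum_range_choose (n := M)
  have h2 : ∑ i ∈ range (M + 1), (-1 : ℝ) ^ i * (M.choose i : ℝ)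
      = if M = 0 then 1 else 0 := by
    have h3 := congrArg (fun z : ℤ => (z : ℝ)) h
    push_cast at h3
    rcases eq_or_ne M 0 with rfl | hM
    · simp
    · simpa [hM] using h3
  calc ∑ t ∈ range (M + 1), (-1 : ℝ) ^ (M - t) * (M.choose t : ℝ)
      = (-1 : ℝ) ^ M * ∑ t ∈ range (M + 1), (-1 : ℝ) ^ t * (M.choose t : ℝ) := by
        rw [Finset.mul_sum]
        refine Finset.sum_congr rfl fun t ht => ?_
        rw [mem_range, Nat.lt_succ_iff] at ht
        rw [← mul_assoc, ← pow_add,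
          show M + t = (M - t) + 2 * t by omega, pow_add, pow_mul]
        simp
    _ = if M = 0 then 1 else 0 := by
        rw [h2]
        rcases eq_or_ne M 0 with rfl | hM
        · simp
        · simp [hM]

theorem binomial_inversion (F : ℕ → ℝ)
    (G : ℕ → ℝ) (h : ∀ j, G j = ∑ i ∈ range (j + 1), (j.choose i : ℝ) * F i) (k : ℕ) :
    F k = ∑ j ∈ range (k + 1), (-1 : ℝ) ^ (k - j) * (k.choose j : ℝ) * G j := by
  symm
  have swap :
      ∑ j ∈ range (k + 1), ∑ i ∈ range (j + 1),
          (-1 : ℝ) ^ (k - j) * (k.choose j : ℝ) * ((j.choose i : ℝ) * F i)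
        = ∑ i ∈ range (k + 1), ∑ j ∈ Ico i (k + 1),
          (-1 : ℝ) ^ (k - j) * (k.choose j : ℝ) * ((j.choose i : ℝ) * F i) := by
    refine Finset.sum_comm' ?_
    intro j i
    simp only [mem_range, mem_Ico, Nat.lt_succ_iff]
    omega
  have inner : ∀ i ∈ range (k + 1),
      ∑ j ∈ Ico i (k + 1), (-1 : ℝ) ^ (k - j) * (k.choose j : ℝ) * ((j.choose i : ℝ) * F i)
        = (if i = k then F k else 0) := by
    intro i hi
    rw [mem_range, Nat.lt_succ_iff] at hi
    have : ∀ j ∈ Ico i (k + 1),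
        (-1 : ℝ) ^ (k - j) * (k.choose j : ℝ) * ((j.choose i : ℝ) * F i)
          = (k.choose i : ℝ) * F i * ((-1 : ℝ) ^ (k - j) * ((k - i).choose (j - i) : ℝ)) := by
      intro j hj
      rw [mem_Ico, Nat.lt_succ_iff] at hj
      have hc := Nat.choose_mul (n := k) (k := j) (s := i) hj.1
      have hc' := congrArg (Nat.cast : ℕ → ℝ) hc
      push_cast at hc'
      linear_combination ((-1 : ℝ) ^ (k - j) * F i) * hc'
    rw [Finset.sum_congr rfl this, ← Finset.mul_sum]
    rw [Finset.sum_Ico_eq_sum_range]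
    have hrange : k + 1 - i = (k - i) + 1 := by omega
    rw [hrange]
    have : ∑ t ∈ range ((k - i) + 1), (-1 : ℝ) ^ (k - (i + t)) * ((k - i).choose ((i + t) - i) : ℝ)
        = ∑ t ∈ range ((k - i) + 1), (-1 : ℝ) ^ ((k - i) - t) * ((k - i).choose t : ℝ) := by
      refine Finset.sum_congr rfl fun t ht => ?_
      rw [mem_range, Nat.lt_succ_iff] at ht
      congr 2
      · omega
      · congr 1; omega
    rw [this, alt_sum_choose_real]
    rcases eq_or_ne i k with rfl | hik
    · simp
    · have : k - i ≠ 0 := by omega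
      simp [hik, this]
  calc ∑ j ∈ range (k + 1), (-1 : ℝ) ^ (k - j) * (k.choose j : ℝ) * G j
      = ∑ j ∈ range (k + 1), ∑ i ∈ range (j + 1),
          (-1 : ℝ) ^ (k - j) * (k.choose j : ℝ) * ((j.choose i : ℝ) * F i) := by
        refine Finset.sum_congr rfl fun j _ => ?_
        rw [h j, Finset.mul_sum]
    _ = ∑ i ∈ range (k + 1), (if i = k then F k else 0) := by
        rw [swap]; exact Finset.sum_congr rfl inner
    _ = F k := by rw [Finset.sum_ite_eq' (range (k+1)) k fun _ => F k]; simp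

variable {m k : ℕ}

def fiber (f : Fin m → Fin k) (i : Fin k) : Finset (Fin m) :=
  Finset.univ.filter (fun x => f x = i)

lemma mem_fiber {f : Fin m → Fin k} {i : Fin k} {x : Fin m} :
    x ∈ fiber f i ↔ f x = i := by simp [fiber]

lemma fiber_injective {f : Fin m → Fin k} (hf : Surjective f) :
    Function.Injective (fiber f) := by
  intro i j h
  obtain ⟨x, hx⟩ := hf i
  have : x ∈ fiber f j := h ▸ mem_fiber.2 hx
  rw [mem_fiber] at this
  rw [← hx, this]

def fpart (f : Fin m → Fin k) (hf : Surjective f) :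
    Finpartition (Finset.univ : Finset (Fin m)) where
  parts := Finset.univ.image (fiber f)
  supIndep := by
    rw [Finset.supIndep_iff_pairwiseDisjoint]
    rintro a ha b hb hab
    simp only [coe_image, coe_univ, Set.image_univ, Set.mem_range] at ha hb
    obtain ⟨i, rfl⟩ := ha
    obtain ⟨j, rfl⟩ := hb
    refine Finset.disjoint_left.2 fun x hxi hxj => hab ?_
    simp only [id_eq, mem_fiber] at hxi hxj
    rw [← hxi, hxj]
  sup_parts := by
    refine le_antisymm (Finset.sup_le fun b _ => Finset.subset_univ b) fun x _ => ?_
    exact Finset.mem_sup.2 ⟨fiber f (f x), mem_image_of_mem _ (mem_univ _),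
      mem_fiber.2 rfl⟩
  bot_notMem := by
    simp only [bot_eq_empty, mem_image, mem_univ, true_and, not_exists]
    intro i h
    obtain ⟨x, hx⟩ := hf i
    have : x ∈ fiber f i := mem_fiber.2 hx
    rw [h] at this
    exact notMem_empty _ this

lemma card_fpart_parts (f : Fin m → Fin k) (hf : Surjective f) :
    (fpart f hf).parts.card = k := by
  rw [fpart]
  rw [Finset.card_image_of_injective _ (fiber_injective hf), card_univ, Fintype.card_fin]

lemma part_fpart (f : Fin m → Fin k) (hf : Surjective f) (x : Fin m) :
    (fpart f hf).part x = fiber f (f x) :=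
  Finpartition.part_eq_of_mem _ (mem_image_of_mem _ (mem_univ _)) (mem_fiber.2 rfl)

def glabel (f : Fin m → Fin k) (hf : Surjective f) :
    Fin k → {b // b ∈ (fpart f hf).parts} :=
  fun i => ⟨fiber f i, mem_image_of_mem _ (mem_univ _)⟩

lemma glabel_bijective (f : Fin m → Fin k) (hf : Surjective f) :
    Function.Bijective (glabel f hf) := by
  constructor
  · intro i j h
    exact fiber_injective hf (congrArg Subtype.val h)
  · rintro ⟨b, hb⟩
    obtain ⟨i, -, rfl⟩ := mem_image.1 hb
    exact ⟨i, rfl⟩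

lemma sigma_eq_aux
    (P₁ P₂ : {P : Finpartition (Finset.univ : Finset (Fin m)) // P.parts.card = k})
    (e₁ : {b // b ∈ P₁.1.parts} ≃ Fin k) (e₂ : {b // b ∈ P₂.1.parts} ≃ Fin k)
    (h : P₁.1 = P₂.1)
    (h2 : ∀ b (hb : b ∈ P₁.1.parts), e₁ ⟨b, hb⟩ = e₂ ⟨b, h ▸ hb⟩) :
    (⟨P₁, e₁⟩ : Σ P : {P : Finpartition (Finset.univ : Finset (Fin m)) // P.parts.card = k},
        ({b // b ∈ P.1.parts} ≃ Fin k)) = ⟨P₂, e₂⟩ := by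
  obtain ⟨P₁, hP₁⟩ := P₁
  obtain ⟨P₂, hP₂⟩ := P₂
  simp only at h
  subst h
  simp only [Sigma.mk.inj_iff, heq_eq_eq]
  refine ⟨by trivial, Equiv.ext fun b => ?_⟩
  obtain ⟨b, hb⟩ := b
  exact h2 b hb

lemma key_right_inv (P : Finpartition (Finset.univ : Finset (Fin m)))
    (hP : P.parts.card = k) (e : {b // b ∈ P.parts} ≃ Fin k)
    (hf : Function.Surjective
      (fun x => (e ⟨P.part x, P.part_mem.2 (mem_univ x)⟩ : Fin k))) :
    (⟨⟨fpart _ hf, card_fpart_parts _ hf⟩,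
        (Equiv.ofBijective (glabel _ hf) (glabel_bijective _ hf)).symm⟩ :
      Σ P : {P : Finpartition (Finset.univ : Finset (Fin m)) // P.parts.card = k},
        ({b // b ∈ P.1.parts} ≃ Fin k)) = ⟨⟨P, hP⟩, e⟩ := by
  set f : Fin m → Fin k := fun x => e ⟨P.part x, P.part_mem.2 (mem_univ x)⟩ with hfdef
  have hfiber : ∀ i : Fin k, fiber f i = (e.symm i).1 := by
    intro i
    ext x
    rw [mem_fiber]
    constructor
    · intro hx
      have h4 : (⟨P.part x, P.part_mem.2 (mem_univ x)⟩ : {b // b ∈ P.parts}) = e.symm i := by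
        rw [← hx]; exact (Equiv.symm_apply_apply e _).symm
      have h5 := congrArg Subtype.val h4
      simp only at h5
      rw [← h5]
      exact P.mem_part (mem_univ x)
    · intro hx
      have hpart : P.part x = (e.symm i).1 := Finpartition.part_eq_of_mem _ (e.symm i).2 hx
      show e ⟨P.part x, P.part_mem.2 (mem_univ x)⟩ = i
      have h6 : (⟨P.part x, P.part_mem.2 (mem_univ x)⟩ : {b // b ∈ P.parts}) = e.symm i :=
        Subtype.ext hpart
      rw [h6, Equiv.apply_symm_apply]
  have hparts : (fpart f hf).parts = P.parts := by
    ext b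
    simp only [fpart, mem_image, mem_univ, true_and]
    constructor
    · rintro ⟨i, rfl⟩
      rw [hfiber i]
      exact (e.symm i).2
    · intro hb
      refine ⟨e ⟨b, hb⟩, ?_⟩
      rw [hfiber, Equiv.symm_apply_apply]
  have hPeq : fpart f hf = P := Finpartition.ext hparts
  refine sigma_eq_aux _ _ _ _ hPeq ?_
  intro b hb
  obtain ⟨i, -, hib⟩ := mem_image.1 hb
  have h1 : (⟨b, hb⟩ : {b // b ∈ (fpart f hf).parts}) = glabel f hf i :=
    Subtype.ext hib.symm
  rw [h1, Equiv.ofBijective_symm_apply_apply]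
  have h2 : (⟨b, hPeq ▸ hb⟩ : {b // b ∈ P.parts}) = e.symm i := by
    refine Subtype.ext ?_
    show b = (e.symm i).1
    rw [← hib]
    exact hfiber i
  rw [h2, Equiv.apply_symm_apply]

noncomputable def surjPartEquiv (m k : ℕ) :
    {f : Fin m → Fin k // Function.Surjective f} ≃
      Σ P : {P : Finpartition (Finset.univ : Finset (Fin m)) // P.parts.card = k},
        ({b // b ∈ P.1.parts} ≃ Fin k) where
  toFun f := ⟨⟨fpart f.1 f.2, card_fpart_parts f.1 f.2⟩,
    (Equiv.ofBijective (glabel f.1 f.2) (glabel_bijective f.1 f.2)).symm⟩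
  invFun Pe := ⟨fun x => Pe.2 ⟨Pe.1.1.part x, Pe.1.1.part_mem.2 (mem_univ x)⟩, by
    intro i
    obtain ⟨x, hx⟩ := Pe.1.1.nonempty_of_mem_parts (Pe.2.symm i).2
    refine ⟨x, ?_⟩
    have hpart : Pe.1.1.part x = (Pe.2.symm i).1 :=
      Finpartition.part_eq_of_mem _ (Pe.2.symm i).2 hx
    show Pe.2 ⟨Pe.1.1.part x, Pe.1.1.part_mem.2 (mem_univ x)⟩ = i
    have h3 : (⟨Pe.1.1.part x, Pe.1.1.part_mem.2 (mem_univ x)⟩ :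
        {b // b ∈ Pe.1.1.parts}) = Pe.2.symm i := Subtype.ext hpart
    rw [h3, Equiv.apply_symm_apply]⟩
  left_inv f := by
    refine Subtype.ext (funext fun x => ?_)
    show (Equiv.ofBijective (glabel f.1 f.2) (glabel_bijective f.1 f.2)).symm _ = f.1 x
    have : (⟨(fpart f.1 f.2).part x, (fpart f.1 f.2).part_mem.2 (mem_univ x)⟩ :
        {b // b ∈ (fpart f.1 f.2).parts}) = glabel f.1 f.2 (f.1 x) :=
      Subtype.ext (part_fpart f.1 f.2 x)
    rw [this, Equiv.ofBijective_symm_apply_apply]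
  right_inv := by
    rintro ⟨⟨P, hP⟩, e⟩
    exact key_right_inv P hP e _

noncomputable instance finpartitionFintype (m : ℕ) :
    Fintype (Finpartition (Finset.univ : Finset (Fin m))) :=
  Fintype.ofInjective Finpartition.parts fun _ _ h => Finpartition.ext h

theorem surjCard_eq (m k : ℕ) :
    surjCard m k = Nat.card
      {P : Finpartition (Finset.univ : Finset (Fin m)) // P.parts.card = k} * k.factorial := by
  classical
  rw [surjCard, Fintype.card_congr (surjPartEquiv m k), Fintype.card_sigma]
  rw [Nat.card_eq_fintype_card]
  have hc : ∀ P : {P : Finpartition (Finset.univ : Finset (Fin m)) // P.parts.card = k},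
      Fintype.card ({b // b ∈ P.1.parts} ≃ Fin k) = k.factorial := by
    intro P
    have hcard : Fintype.card {b // b ∈ P.1.parts} = k := by
      rw [Fintype.card_coe]; exact P.2
    rw [Fintype.card_equiv (Fintype.equivFinOfCardEq hcard), hcard]
  rw [Finset.sum_congr rfl fun P _ => hc P, Finset.sum_const, smul_eq_mul, Finset.card_univ]

theorem surjCard_eq_stirling2_mul (M k : ℕ) :
    surjCard M k = stirling2 M k * k.factorial :=
  surjCard_eq M k

theorem stirling2_mul_factorial (M k : ℕ) :
    (stirling2 M k : ℝ) * (k.factorial : ℝ) =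
      ∑ j ∈ range (k + 1), (-1 : ℝ) ^ (k - j) * (k.choose j : ℝ) * (j : ℝ) ^ M := by
  have h := binomial_inversion (fun j => (surjCard M j : ℝ)) (fun j => (j : ℝ) ^ M)
    (fun j => by
      have h0 := sum_choose_surjCard M j
      have h1 := congrArg (Nat.cast : ℕ → ℝ) h0
      push_cast at h1
      exact h1.symm) k
  have h2 := congrArg (Nat.cast : ℕ → ℝ) (surjCard_eq_stirling2_mul M k)
  push_cast at h2
  rw [← h2, h]

/-- **Generalized Stirling numbers via ordinary Stirling numbers.** The generalized Stirling
numbers `S_{2,2}(n,k) = (1/k!) ∑_{j} (-1)^{k-j} C(k,j) [j(j-1)]^n` satisfy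
`S_{2,2}(n,k) = ∑_{r=0}^{n} (-1)^{n-r} C(n,r) S(n+r,k)`, where `S` denotes the ordinary
Stirling numbers of the second kind. -/
theorem generalized_stirling_eq_alternating_stirling_sum (n k : ℕ) :
    (1 / (Nat.factorial k : ℝ)) *
        ∑ j ∈ Finset.range (k + 1),
          (-1 : ℝ) ^ (k - j) * (Nat.choose k j : ℝ) * ((j : ℝ) * ((j : ℝ) - 1)) ^ n =
      ∑ r ∈ Finset.range (n + 1),
        (-1 : ℝ) ^ (n - r) * (Nat.choose n r : ℝ) * (stirling2 (n + r) k : ℝ) := by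
  have hk : (k.factorial : ℝ) ≠ 0 := Nat.cast_ne_zero.2 (Nat.factorial_ne_zero k)
  rw [div_mul_eq_mul_div, one_mul, div_eq_iff hk]
  calc ∑ j ∈ Finset.range (k + 1),
        (-1 : ℝ) ^ (k - j) * (Nat.choose k j : ℝ) * ((j : ℝ) * ((j : ℝ) - 1)) ^ n
      = ∑ j ∈ Finset.range (k + 1), ∑ r ∈ Finset.range (n + 1),
          (-1 : ℝ) ^ (n - r) * (Nat.choose n r : ℝ) *
            ((-1 : ℝ) ^ (k - j) * (Nat.choose k j : ℝ) * (j : ℝ) ^ (n + r)) := by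
        refine Finset.sum_congr rfl fun j _ => ?_
        have hbin : ((j : ℝ) - 1) ^ n
            = ∑ r ∈ Finset.range (n + 1), (j : ℝ) ^ r * (-1 : ℝ) ^ (n - r) * (n.choose r : ℝ) := by
          rw [sub_eq_add_neg]
          simpa using add_pow (j : ℝ) (-1 : ℝ) n
        rw [mul_pow, hbin, Finset.mul_sum, Finset.mul_sum]
        refine Finset.sum_congr rfl fun r hr => ?_
        rw [pow_add]
        ring
    _ = ∑ r ∈ Finset.range (n + 1), (-1 : ℝ) ^ (n - r) * (Nat.choose n r : ℝ) *
          ∑ j ∈ Finset.range (k + 1),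
            (-1 : ℝ) ^ (k - j) * (Nat.choose k j : ℝ) * (j : ℝ) ^ (n + r) := by
        rw [Finset.sum_comm]
        exact Finset.sum_congr rfl fun r _ => (Finset.mul_sum _ _ _).symm
    _ = (∑ r ∈ Finset.range (n + 1),
          (-1 : ℝ) ^ (n - r) * (Nat.choose n r : ℝ) * (stirling2 (n + r) k : ℝ)) *
            (k.factorial : ℝ) := by
        rw [Finset.sum_mul]
        refine Finset.sum_congr rfl fun r _ => ?_
        rw [← stirling2_mul_factorial (n + r) k]
        ring
end

section
/- The number of set partitions of {1,…,n} with no contiguity (no block containing two consecutive integers j, j+1) equals the Bell number B(n-1), for all n ≥ 1. -/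
open Finset

section PartA
variable {α : Type*} [DecidableEq α] [Fintype α]

noncomputable def toSetoid (P : Finpartition (univ : Finset α)) : Setoid α :=
  ⟨fun a b => P.part a = P.part b, ⟨fun _ => rfl, Eq.symm, Eq.trans⟩⟩

lemma finpartition_ext_part {P Q : Finpartition (univ : Finset α)}
    (h : ∀ a, P.part a = Q.part a) : P = Q := by
  ext t
  constructor
  · intro ht
    obtain ⟨a, -, ha⟩ := P.part_surjOn ht
    rw [← ha, h]
    exact Q.part_mem.mpr (mem_univ a)
  · intro ht
    obtain ⟨a, -, ha⟩ := Q.part_surjOn ht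
    rw [← ha, ← h]
    exact P.part_mem.mpr (mem_univ a)

noncomputable def partitionSetoidEquiv (α : Type*) [DecidableEq α] [Fintype α] :
    Finpartition (univ : Finset α) ≃ Setoid α where
  toFun := toSetoid
  invFun s := letI := Classical.decRel s.r; Finpartition.ofSetoid s
  left_inv P := by
    letI := Classical.decRel (toSetoid P).r
    apply finpartition_ext_part (Q := P)
    intro a
    ext b
    rw [Finpartition.mem_part_ofSetoid_iff_rel]
    show P.part a = P.part b ↔ _
    rw [P.mem_part_iff_part_eq_part (mem_univ b) (mem_univ a)]
    exact eq_comm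
  right_inv s := by
    letI := Classical.decRel s.r
    apply Setoid.ext
    intro a b
    show (Finpartition.ofSetoid s).part a = (Finpartition.ofSetoid s).part b ↔ _
    constructor
    · intro h
      have ha := (Finpartition.ofSetoid s).mem_part (mem_univ a)
      rw [h] at ha
      exact s.symm (Finpartition.mem_part_ofSetoid_iff_rel.mp ha)
    · intro h
      have hb : b ∈ (Finpartition.ofSetoid s).part a :=
        Finpartition.mem_part_ofSetoid_iff_rel.mpr h
      exact ((Finpartition.ofSetoid s).mem_part_iff_part_eq_part
        (mem_univ b) (mem_univ a)).mp hb |>.symm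

lemma toSetoid_rel_iff {P : Finpartition (univ : Finset α)} {a b : α} :
    (toSetoid P).r a b ↔ ∃ t ∈ P.parts, a ∈ t ∧ b ∈ t := by
  constructor
  · intro h
    exact ⟨P.part a, P.part_mem.mpr (mem_univ a), P.mem_part (mem_univ a),
      h ▸ P.mem_part (mem_univ b)⟩
  · rintro ⟨t, ht, hat, hbt⟩
    show P.part a = P.part b
    rw [P.part_eq_of_mem ht hat, P.part_eq_of_mem ht hbt]
end PartA

section PartB
variable {n : ℕ}

/-- minimal representative of the class of `i` -/
noncomputable def mrep (s : Setoid (Fin n)) (i : Fin n) : Fin n :=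
  letI := fun j => Classical.dec (s.r i j)
  (univ.filter fun j => s.r i j).min' ⟨i, mem_filter.mpr ⟨mem_univ i, s.refl i⟩⟩

lemma mrep_rel (s : Setoid (Fin n)) (i : Fin n) : s.r i (mrep s i) := by
  letI := fun j => Classical.dec (s.r i j)
  have := Finset.min'_mem (univ.filter fun j => s.r i j)
    ⟨i, mem_filter.mpr ⟨mem_univ i, s.refl i⟩⟩
  simpa [mrep] using (mem_filter.mp this).2

lemma mrep_le (s : Setoid (Fin n)) (i : Fin n) : mrep s i ≤ i := by
  letI := fun j => Classical.dec (s.r i j)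
  exact Finset.min'_le _ i (mem_filter.mpr ⟨mem_univ i, s.refl i⟩)

lemma mrep_le_of_rel (s : Setoid (Fin n)) {i j : Fin n} (h : s.r i j) :
    mrep s i ≤ j := by
  letI := fun k => Classical.dec (s.r i k)
  exact Finset.min'_le _ j (mem_filter.mpr ⟨mem_univ j, h⟩)

lemma mrep_eq_of_rel (s : Setoid (Fin n)) {i j : Fin n} (h : s.r i j) :
    mrep s i = mrep s j := by
  letI := fun a b => Classical.dec (s.r a b)
  have key : ∀ a b : Fin n, s.r a b → mrep s a ≤ mrep s b := by
    intro a b hab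
    exact mrep_le_of_rel s (s.trans hab (mrep_rel s b))
  exact le_antisymm (key _ _ h) (key _ _ (s.symm h))

lemma rel_iff_mrep (s : Setoid (Fin n)) (i j : Fin n) :
    s.r i j ↔ mrep s i = mrep s j := by
  refine ⟨mrep_eq_of_rel s, fun h => ?_⟩
  exact s.trans (mrep_rel s i) (h ▸ s.symm (mrep_rel s j))

lemma mrep_idem (s : Setoid (Fin n)) (i : Fin n) : mrep s (mrep s i) = mrep s i :=
  (mrep_eq_of_rel s (mrep_rel s i)).symm

/-- canonical restricted-growth coloring of a setoid -/
noncomputable def rgsOf (s : Setoid (Fin n)) (i : Fin n) : ℕ :=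
  #(univ.filter fun j => mrep s j = j ∧ j < mrep s i)

lemma rgsOf_lt_of_mrep_lt (s : Setoid (Fin n)) {i j : Fin n}
    (h : mrep s i < mrep s j) : rgsOf s i < rgsOf s j := by
  apply Finset.card_lt_card
  constructor
  · intro k hk
    simp only [mem_filter, mem_univ, true_and] at hk ⊢
    exact ⟨hk.1, lt_trans hk.2 h⟩
  · intro hsub
    have : mrep s i ∈ univ.filter fun k => mrep s k = k ∧ k < mrep s j := by
      simp [mrep_idem, h]
    have := hsub this
    simp only [mem_filter, mem_univ, true_and] at this
    exact lt_irrefl _ this.2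

lemma rgsOf_eq_iff (s : Setoid (Fin n)) (i j : Fin n) :
    rgsOf s i = rgsOf s j ↔ mrep s i = mrep s j := by
  constructor
  · intro h
    rcases lt_trichotomy (mrep s i) (mrep s j) with hl | he | hg
    · exact absurd h (rgsOf_lt_of_mrep_lt s hl).ne
    · exact he
    · exact absurd h.symm (rgsOf_lt_of_mrep_lt s hg).ne
  · intro h
    unfold rgsOf
    rw [h]

/-- restricted growth condition -/
def IsRGS {N : ℕ} (w : Fin N → ℕ) : Prop :=
  ∀ i : Fin N, w i ≤ (univ.filter (· < i)).sup fun j => w j + 1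

lemma isRGS_rgsOf (s : Setoid (Fin n)) : IsRGS (rgsOf s) := by
  intro i
  rcases lt_or_eq_of_le (mrep_le s i) with hlt | heq
  · have h1 : rgsOf s (mrep s i) = rgsOf s i := by
      rw [rgsOf_eq_iff, mrep_idem]
    calc rgsOf s i = rgsOf s (mrep s i) := h1.symm
      _ ≤ rgsOf s (mrep s i) + 1 := Nat.le_succ _
      _ ≤ _ := Finset.le_sup (f := fun j => rgsOf s j + 1) (show mrep s i ∈ univ.filter (· < i) from
          mem_filter.mpr ⟨mem_univ _, hlt⟩)
  · set S := univ.filter fun j => mrep s j = j ∧ j < i with hS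
    have hcard : rgsOf s i = #S := by rw [rgsOf, heq]
    rcases S.eq_empty_or_nonempty with he | hne
    · rw [hcard, he]
      simp
    · set j0 := S.max' hne with hj0
      have hj0mem : j0 ∈ S := S.max'_mem hne
      simp only [hS, mem_filter, mem_univ, true_and] at hj0mem
      have hfe : (univ.filter fun j => mrep s j = j ∧ j < mrep s j0) = S.erase j0 := by
        ext k
        simp only [hS, mem_filter, mem_univ, true_and, mem_erase, hj0mem.1]
        constructor
        · intro ⟨h1, h2⟩
          exact ⟨ne_of_lt h2, h1, lt_trans h2 hj0mem.2⟩
        · intro ⟨h1, h2, h3⟩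
          refine ⟨h2, lt_of_le_of_ne ?_ h1⟩
          exact S.le_max' k (by simp [hS, h2, h3])
      have : rgsOf s j0 = #S - 1 := by
        rw [rgsOf, hfe, Finset.card_erase_of_mem (S.max'_mem hne)]
      have hpos : 1 ≤ #S := Finset.card_pos.mpr hne
      calc rgsOf s i = #S := hcard
        _ = (#S - 1) + 1 := by omega
        _ = rgsOf s j0 + 1 := by rw [this]
        _ ≤ _ := Finset.le_sup (f := fun j => rgsOf s j + 1) (show j0 ∈ univ.filter (· < i) from
            mem_filter.mpr ⟨mem_univ _, hj0mem.2⟩)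
end PartB

section PartC
variable {N : ℕ}

/-- first occurrence of a value -/
def fo (w : Fin N → ℕ) (i : Fin N) : Prop := ∀ j : Fin N, j < i → w j ≠ w i

instance foDec {N : ℕ} (w : Fin N → ℕ) : DecidablePred (fo w) := fun i => by
  unfold fo; infer_instance


lemma sup_of_image_range {w : Fin N → ℕ} {S : Finset (Fin N)} {t : ℕ}
    (h : S.image w = range t) : (S.sup fun j => w j + 1) = t := by
  apply le_antisymm
  · apply Finset.sup_le
    intro j hj
    have : w j ∈ range t := h ▸ Finset.mem_image_of_mem w hj
    rw [mem_range] at this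
    omega
  · rcases Nat.eq_zero_or_pos t with rfl | ht
    · exact Nat.zero_le _
    · have : t - 1 ∈ S.image w := by rw [h, mem_range]; omega
      obtain ⟨j, hj, hw⟩ := mem_image.mp this
      calc t = w j + 1 := by omega
        _ ≤ _ := Finset.le_sup (f := fun j => w j + 1) hj
end PartC

section PartC2
variable {N : ℕ}

lemma image_range_claim {w : Fin N → ℕ} (hw : IsRGS w) (k : ℕ) :
    (univ.filter fun j : Fin N => (j : ℕ) < k).image w =
      range #(univ.filter fun j : Fin N => fo w j ∧ (j : ℕ) < k) := by
  induction k with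
  | zero => simp
  | succ k ih =>
    by_cases hk : k < N
    · set i : Fin N := ⟨k, hk⟩ with hi
      have hfe : (univ.filter fun j : Fin N => (j : ℕ) < k + 1) =
          insert i (univ.filter fun j : Fin N => (j : ℕ) < k) := by
        ext j
        simp only [mem_filter, mem_univ, true_and, mem_insert]
        constructor
        · intro h
          rcases Nat.lt_succ_iff_lt_or_eq.mp h with h | h
          · exact Or.inr h
          · exact Or.inl (Fin.ext h)
        · rintro (rfl | h)
          · exact Nat.lt_succ_self k
          · omega
      have hlt_eq : (univ.filter (· < i)) =
          (univ.filter fun j : Fin N => (j : ℕ) < k) := by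
        apply Finset.filter_congr
        intro j _
        exact Iff.rfl
      set t := #(univ.filter fun j : Fin N => fo w j ∧ (j : ℕ) < k) with hts
      have hsup : ((univ.filter fun j : Fin N => (j : ℕ) < k).sup fun j => w j + 1) = t :=
        sup_of_image_range ih
      have hinotmem : i ∉ (univ.filter fun j : Fin N => (j : ℕ) < k) := by
        simp [hi]
      rw [hfe, Finset.image_insert, ih]
      by_cases hfo : fo w i
      · -- new value: w i = t
        have hwit : w i = t := by
          have h1 : w i ≤ t := by
            have := hw i
            rwa [hlt_eq, hsup] at this
          have h2 : w i ∉ range t := by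
            rw [← ih]
            intro hmem
            obtain ⟨j, hj, hwj⟩ := mem_image.mp hmem
            simp only [mem_filter, mem_univ, true_and] at hj
            exact hfo j (show j < i from hj) hwj
          rw [mem_range] at h2
          omega
        have hcnt : (univ.filter fun j : Fin N => fo w j ∧ (j : ℕ) < k + 1) =
            insert i (univ.filter fun j : Fin N => fo w j ∧ (j : ℕ) < k) := by
          ext j
          simp only [mem_filter, mem_univ, true_and, mem_insert]
          constructor
          · rintro ⟨h1, h2⟩
            rcases Nat.lt_succ_iff_lt_or_eq.mp h2 with h | h
            · exact Or.inr ⟨h1, h⟩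
            · exact Or.inl (Fin.ext h)
          · rintro (rfl | ⟨h1, h2⟩)
            · exact ⟨hfo, Nat.lt_succ_self k⟩
            · exact ⟨h1, by omega⟩
        rw [hcnt, Finset.card_insert_of_notMem (by simp [hi]), hwit]
        rw [Finset.range_add_one]
      · -- old value : w i ∈ range t
        have hmem : w i ∈ range t := by
          rw [← ih]
          simp only [fo, not_forall] at hfo
          obtain ⟨j, hj, hwj⟩ := hfo
          rw [not_not] at hwj
          rw [← hwj]
          exact Finset.mem_image_of_mem w (mem_filter.mpr ⟨mem_univ j, hj⟩)
        have hcnt : (univ.filter fun j : Fin N => fo w j ∧ (j : ℕ) < k + 1) =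
            (univ.filter fun j : Fin N => fo w j ∧ (j : ℕ) < k) := by
          apply Finset.filter_congr
          intro j _
          constructor
          · rintro ⟨h1, h2⟩
            refine ⟨h1, ?_⟩
            rcases Nat.lt_succ_iff_lt_or_eq.mp h2 with h | h
            · exact h
            · exact absurd (Fin.ext h : j = i) (by rintro rfl; exact hfo h1)
          · rintro ⟨h1, h2⟩
            exact ⟨h1, by omega⟩
        rw [hcnt, Finset.insert_eq_self.mpr hmem]
    · -- k ≥ N : filters stable
      have h1 : (univ.filter fun j : Fin N => (j : ℕ) < k + 1) =
          (univ.filter fun j : Fin N => (j : ℕ) < k) := by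
        apply Finset.filter_congr
        intro j _
        have := j.isLt
        constructor <;> (intro; omega)
      have h2 : (univ.filter fun j : Fin N => fo w j ∧ (j : ℕ) < k + 1) =
          (univ.filter fun j : Fin N => fo w j ∧ (j : ℕ) < k) := by
        apply Finset.filter_congr
        intro j _
        have := j.isLt
        constructor <;> (rintro ⟨a, b⟩; exact ⟨a, by omega⟩)
      rw [h1, h2, ih]
end PartC2

section PartD
variable {N : ℕ}

lemma fo_val {w : Fin N → ℕ} (hw : IsRGS w) {i : Fin N} (hfo : fo w i) :
    w i = #(univ.filter fun j : Fin N => fo w j ∧ (j : ℕ) < (i : ℕ)) := by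
  set t := #(univ.filter fun j : Fin N => fo w j ∧ (j : ℕ) < (i : ℕ)) with ht
  have hclaim := image_range_claim hw (i : ℕ)
  have hlt_eq : (univ.filter (· < i)) =
      (univ.filter fun j : Fin N => (j : ℕ) < (i : ℕ)) :=
    Finset.filter_congr fun j _ => Iff.rfl
  have h1 : w i ≤ t := by
    have := hw i
    rwa [hlt_eq, sup_of_image_range hclaim] at this
  have h2 : w i ∉ range t := by
    rw [← hclaim]
    intro hmem
    obtain ⟨j, hj, hwj⟩ := mem_image.mp hmem
    simp only [mem_filter, mem_univ, true_and] at hj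
    exact hfo j hj hwj
  rw [mem_range] at h2
  omega

lemma ker_mrep_val {w : Fin N → ℕ} (i : Fin N) :
    w (mrep (Setoid.ker w) i) = w i :=
  (mrep_rel (Setoid.ker w) i).symm

lemma ker_mrep_eq_iff_fo {w : Fin N → ℕ} (j : Fin N) :
    mrep (Setoid.ker w) j = j ↔ fo w j := by
  constructor
  · intro h k hk hne
    have hrel : (Setoid.ker w) j k := hne.symm
    have := mrep_le_of_rel (Setoid.ker w) hrel
    rw [h] at this
    exact absurd hk (not_lt.mpr this)
  · intro hfo
    rcases lt_or_eq_of_le (mrep_le (Setoid.ker w) j) with hlt | heq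
    · exact absurd (ker_mrep_val j) (hfo _ hlt)
    · exact heq

lemma rgsOf_ker {w : Fin N → ℕ} (hw : IsRGS w) : rgsOf (Setoid.ker w) = w := by
  funext i
  have hfilter : (univ.filter fun j : Fin N =>
        mrep (Setoid.ker w) j = j ∧ j < mrep (Setoid.ker w) i) =
      (univ.filter fun j : Fin N =>
        fo w j ∧ (j : ℕ) < ((mrep (Setoid.ker w) i : Fin N) : ℕ)) :=
    Finset.filter_congr fun j _ => by rw [ker_mrep_eq_iff_fo]; exact Iff.rfl
  have hfo : fo w (mrep (Setoid.ker w) i) := by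
    rw [← ker_mrep_eq_iff_fo]
    exact mrep_idem _ i
  calc rgsOf (Setoid.ker w) i = _ := by rw [rgsOf, hfilter]
    _ = w (mrep (Setoid.ker w) i) := (fo_val hw hfo).symm
    _ = w i := ker_mrep_val i

noncomputable def setoidRGSEquiv (N : ℕ) :
    Setoid (Fin N) ≃ {w : Fin N → ℕ // IsRGS w} where
  toFun s := ⟨rgsOf s, isRGS_rgsOf s⟩
  invFun w := Setoid.ker w.val
  left_inv s := by
    apply Setoid.ext
    intro a b
    show rgsOf s a = rgsOf s b ↔ _
    rw [rgsOf_eq_iff, ← rel_iff_mrep]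
  right_inv w := Subtype.ext (rgsOf_ker w.2)

lemma setoidRGSEquiv_rel_iff {N : ℕ} (s : Setoid (Fin N)) (a b : Fin N) :
    s.r a b ↔ (setoidRGSEquiv N s).val a = (setoidRGSEquiv N s).val b := by
  show s.r a b ↔ rgsOf s a = rgsOf s b
  rw [rgsOf_eq_iff, ← rel_iff_mrep]
end PartD

section PartE

/-- the forward recursion -/
def Wf (f : ℕ → ℕ) : ℕ → ℕ
  | 0 => 0
  | (k+1) => if Wf f k ≤ f k then f k + 1 else f k

/-- ℕ-level restricted growth -/
def NR (f : ℕ → ℕ) : Prop := ∀ k, f k ≤ (range k).sup fun j => f j + 1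

lemma Wf_adj_ne (f : ℕ → ℕ) (k : ℕ) : Wf f (k+1) ≠ Wf f k := by
  rw [Wf]
  split <;> omega

lemma Wf_succ_le (f : ℕ → ℕ) (k : ℕ) : Wf f (k+1) ≤ f k + 1 := by
  rw [Wf]; split <;> omega

lemma f_le_B (f : ℕ → ℕ) (k : ℕ) : f k + 1 ≤ (range (k+1)).sup fun j => f j + 1 :=
  Finset.le_sup (f := fun j => f j + 1) (self_mem_range_succ k)

lemma B_mono (f : ℕ → ℕ) {a b : ℕ} (h : a ≤ b) :
    ((range a).sup fun j => f j + 1) ≤ (range b).sup fun j => f j + 1 :=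
  Finset.sup_mono (range_subset_range.mpr h)

lemma Wf_le_B (f : ℕ → ℕ) (k : ℕ) (hk : 1 ≤ k) :
    Wf f k ≤ (range k).sup fun j => f j + 1 := by
  obtain ⟨j, rfl⟩ := Nat.exists_eq_add_of_le hk
  calc Wf f (1 + j) = Wf f (j + 1) := by rw [Nat.add_comm]
    _ ≤ f j + 1 := Wf_succ_le f j
    _ ≤ (range (j+1)).sup fun i => f i + 1 := f_le_B f j
    _ ≤ _ := B_mono f (by omega)

/-- key identity, hypothesis-free -/
lemma Wf_sup_identity (f : ℕ → ℕ) (k : ℕ) :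
    ((range (k+1)).sup fun j => Wf f j + 1) = ((range k).sup fun j => f j + 1) + 1 := by
  induction k with
  | zero => simp [Wf]
  | succ k ih =>
    rw [range_add_one, Finset.sup_insert, ih]
    rw [show range (k+1) = insert k (range k) from range_add_one, Finset.sup_insert]
    rcases Nat.lt_or_ge k 1 with hk | hk
    · interval_cases k
      simp only [range_zero, Finset.sup_empty]
      simp [Wf]
    · have hWB := Wf_le_B f k hk
      rw [Wf]
      split
      · omega
      · omega

lemma NR_Wf {f : ℕ → ℕ} (hf : NR f) : NR (Wf f) := by
  intro k
  match k with
  | 0 => simp [Wf]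
  | (k+1) =>
    rw [Wf_sup_identity]
    rw [Wf]
    split
    · have := hf k
      omega
    · rename_i h
      rcases Nat.lt_or_ge k 1 with hk | hk
      · interval_cases k
        simp [Wf] at h
      · have := Wf_le_B f k hk
        have := B_mono f (Nat.le_succ k)
        omega

end PartE

section PartF
variable {N : ℕ}

def extN {N : ℕ} (w : Fin N → ℕ) : ℕ → ℕ := fun k => if h : k < N then w ⟨k, h⟩ else 0

lemma extN_eq {N : ℕ} (w : Fin N → ℕ) {k : ℕ} (h : k < N) : extN w k = w ⟨k, h⟩ :=
  dif_pos h

lemma extN_coe {N : ℕ} (w : Fin N → ℕ) (i : Fin N) : extN w (i : ℕ) = w i := by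
  rw [extN, dif_pos i.isLt]

lemma sup_filter_eq {N : ℕ} (w : Fin N → ℕ) (g : ℕ → ℕ)
    (hg : ∀ k (h : k < N), g k = w ⟨k, h⟩) (i : Fin N) :
    ((univ.filter (· < i)).sup fun j => w j + 1) = (range (i : ℕ)).sup fun k => g k + 1 := by
  apply le_antisymm
  · apply Finset.sup_le
    intro j hj
    have hj' : (j : ℕ) < (i : ℕ) := (mem_filter.mp hj).2
    have hgj : g (j : ℕ) = w j := by rw [hg (j : ℕ) j.isLt]
    calc w j + 1 = g (j : ℕ) + 1 := by rw [hgj]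
      _ ≤ _ := Finset.le_sup (f := fun k => g k + 1) (mem_range.mpr hj')
  · apply Finset.sup_le
    intro k hk
    rw [mem_range] at hk
    have hkN : k < N := lt_trans hk i.isLt
    rw [hg k hkN]
    exact Finset.le_sup (f := fun j => w j + 1)
      (mem_filter.mpr ⟨mem_univ _, show (⟨k, hkN⟩ : Fin N) < i from hk⟩)

lemma isRGS_iff_NR {N : ℕ} (w : Fin N → ℕ) : IsRGS w ↔ NR (extN w) := by
  constructor
  · intro hw k
    by_cases hk : k < N
    · have := hw ⟨k, hk⟩
      rw [sup_filter_eq w (extN w) (fun a ha => (by rw [extN, dif_pos ha]))] at this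
      calc extN w k = w ⟨k, hk⟩ := by rw [extN, dif_pos hk]
        _ ≤ _ := this
    · rw [extN, dif_neg hk]
      exact Nat.zero_le _
  · intro hw i
    have := hw (i : ℕ)
    rw [sup_filter_eq w (extN w) (fun a ha => (by rw [extN, dif_pos ha]))]
    calc w i = extN w (i : ℕ) := (extN_coe w i).symm
      _ ≤ _ := this

def AdjFree {N : ℕ} (w : Fin N → ℕ) : Prop :=
  ∀ j j' : Fin N, (j' : ℕ) = (j : ℕ) + 1 → w j ≠ w j'

variable {m : ℕ}

def Fn (m : ℕ) (u : Fin m → ℕ) : Fin (m+1) → ℕ := fun i => Wf (extN u) (i : ℕ)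

def Gn (m : ℕ) (w : Fin (m+1) → ℕ) : Fin m → ℕ := fun i =>
  if w i.castSucc < w i.succ then w i.succ - 1 else w i.succ

lemma Fn_isRGS {u : Fin m → ℕ} (hu : IsRGS u) : IsRGS (Fn m u) := by
  intro i
  rw [sup_filter_eq (Fn m u) (Wf (extN u)) (fun k h => rfl) i]
  exact NR_Wf ((isRGS_iff_NR u).mp hu) (i : ℕ)

lemma Fn_adjFree (u : Fin m → ℕ) : AdjFree (Fn m u) := by
  intro j j' h
  show Wf (extN u) (j : ℕ) ≠ Wf (extN u) (j' : ℕ)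
  rw [h]
  exact (Wf_adj_ne (extN u) (j : ℕ)).symm

lemma Gn_eq (w : Fin (m+1) → ℕ) (i : Fin m) :
    Gn m w i = if extN w (i : ℕ) < extN w ((i : ℕ) + 1) then extN w ((i : ℕ) + 1) - 1
      else extN w ((i : ℕ) + 1) := by
  have h1 : w i.castSucc = extN w (i : ℕ) := by
    rw [extN_eq w (lt_trans i.isLt (Nat.lt_succ_self m))]
    exact congrArg w (Fin.ext (by simp))
  have h2 : w i.succ = extN w ((i : ℕ) + 1) := by
    rw [extN_eq w (Nat.succ_lt_succ i.isLt)]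
    exact congrArg w (Fin.ext (by simp))
  rw [Gn, h1, h2]

lemma agree {w : Fin (m+1) → ℕ} (hw : IsRGS w) (hadj : AdjFree w) :
    ∀ k, k ≤ m → Wf (extN (Gn m w)) k = extN w k := by
  have hnr : NR (extN w) := (isRGS_iff_NR w).mp hw
  intro k
  induction k with
  | zero =>
    intro _
    have := hnr 0
    simp only [range_zero, Finset.sup_empty, Nat.bot_eq_zero] at this
    rw [Wf]
    omega
  | succ k ih =>
    intro hk1
    have hkm : k < m := hk1
    have ih' := ih (le_of_lt hkm)
    have hfk : extN (Gn m w) k = if extN w k < extN w (k + 1) then extN w (k + 1) - 1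
        else extN w (k + 1) := by
      rw [extN_eq (Gn m w) hkm, Gn_eq]
    have hne : extN w k ≠ extN w (k+1) := by
      rw [extN_eq w (lt_trans hkm (Nat.lt_succ_self m)),
        extN_eq w (Nat.succ_lt_succ hkm)]
      exact hadj _ _ rfl
    rw [Wf, ih', hfk]
    by_cases hlt : extN w k < extN w (k+1)
    · rw [if_pos hlt, if_pos (by omega)]
      omega
    · have hgt : extN w (k+1) < extN w k := by omega
      rw [if_neg hlt, if_neg (by omega)]

lemma Gn_isRGS {w : Fin (m+1) → ℕ} (hw : IsRGS w) (hadj : AdjFree w) :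
    IsRGS (Gn m w) := by
  have hnr : NR (extN w) := (isRGS_iff_NR w).mp hw
  intro i
  rw [sup_filter_eq (Gn m w) (extN (Gn m w)) (fun k h => (by simp only [extN]; rw [dif_pos h])) i]
  have hkm : (i : ℕ) < m := i.isLt
  have hident := Wf_sup_identity (extN (Gn m w)) (i : ℕ)
  have hsupeq : ((range ((i : ℕ)+1)).sup fun j => Wf (extN (Gn m w)) j + 1) =
      (range ((i : ℕ)+1)).sup fun j => extN w j + 1 := by
    apply Finset.sup_congr rfl
    intro j hj
    rw [mem_range] at hj
    rw [agree hw hadj j (by omega)]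
  rw [hsupeq] at hident
  have h1 : extN w ((i : ℕ)+1) ≤ (range ((i : ℕ)+1)).sup fun j => extN w j + 1 := hnr ((i : ℕ)+1)
  have h2 : extN w (i : ℕ) ≤ (range ((i : ℕ)+1)).sup fun j => extN w j + 1 :=
    le_trans (hnr (i : ℕ)) (B_mono (extN w) (Nat.le_succ (i : ℕ)))
  have hne : extN w (i : ℕ) ≠ extN w ((i : ℕ)+1) := by
    rw [extN_eq w (lt_trans hkm (Nat.lt_succ_self m)),
      extN_eq w (Nat.succ_lt_succ hkm)]
    exact hadj _ _ rfl
  rw [Gn_eq]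
  split
  · omega
  · omega

lemma Gn_Fn (u : Fin m → ℕ) : Gn m (Fn m u) = u := by
  funext i
  have hfu : extN (Fn m u) ((i : ℕ) + 1) = Wf (extN u) ((i : ℕ) + 1) := by
    rw [extN, dif_pos (Nat.succ_lt_succ i.isLt)]
    rfl
  have hfu0 : extN (Fn m u) (i : ℕ) = Wf (extN u) (i : ℕ) := by
    rw [extN, dif_pos (lt_trans i.isLt (Nat.lt_succ_self m))]
    rfl
  have hui : extN u (i : ℕ) = u i := extN_coe u i
  rw [Gn_eq, hfu, hfu0]
  rw [Wf, hui]
  by_cases h : Wf (extN u) (i : ℕ) ≤ u i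
  · rw [if_pos h, if_pos (by omega)]
    omega
  · rw [if_neg h, if_neg (by omega)]

lemma Fn_Gn {w : Fin (m+1) → ℕ} (hw : IsRGS w) (hadj : AdjFree w) :
    Fn m (Gn m w) = w := by
  funext i
  calc Fn m (Gn m w) i = Wf (extN (Gn m w)) (i : ℕ) := rfl
    _ = extN w (i : ℕ) := agree hw hadj (i : ℕ) (by omega)
    _ = w i := extN_coe w i

def rgsStepEquiv (m : ℕ) :
    {w : Fin (m+1) → ℕ // IsRGS w ∧ AdjFree w} ≃ {u : Fin m → ℕ // IsRGS u} where
  toFun w := ⟨Gn m w.val, Gn_isRGS w.2.1 w.2.2⟩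
  invFun u := ⟨Fn m u.val, Fn_isRGS u.2, Fn_adjFree u.val⟩
  left_inv w := Subtype.ext (Fn_Gn w.2.1 w.2.2)
  right_inv u := Subtype.ext (Gn_Fn u.val)

end PartF

section Final

lemma pred_iff_setoid {N : ℕ} (P : Finpartition (univ : Finset (Fin N))) :
    (∀ b ∈ P.parts, ∀ j j' : Fin N, (j' : ℕ) = (j : ℕ) + 1 → j ∈ b → j' ∉ b) ↔
      (∀ j j' : Fin N, (j' : ℕ) = (j : ℕ) + 1 → ¬ (toSetoid P).r j j') := by
  constructor
  · intro h j j' hjj hrel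
    obtain ⟨t, ht, hjt, hj't⟩ := toSetoid_rel_iff.mp hrel
    exact h t ht j j' hjj hjt hj't
  · intro h b hb j j' hjj hjb hj'b
    exact h j j' hjj (toSetoid_rel_iff.mpr ⟨b, hb, hjb, hj'b⟩)

lemma pred_iff_rgs {N : ℕ} (s : Setoid (Fin N)) :
    (∀ j j' : Fin N, (j' : ℕ) = (j : ℕ) + 1 → ¬ s.r j j') ↔
      AdjFree ((setoidRGSEquiv N) s).val := by
  constructor
  · intro h j j' hjj heq
    exact h j j' hjj ((setoidRGSEquiv_rel_iff s j j').mpr heq)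
  · intro h j j' hjj hrel
    exact h j j' hjj ((setoidRGSEquiv_rel_iff s j j').mp hrel)

/-- **Contiguity-free set partitions.** For `n ≥ 1`, the number of set partitions of
`{1,…,n}` having no contiguity (no block containing two consecutive integers `j, j+1`)
equals the Bell number `B(n-1)`. -/
theorem contiguity_free_partitions_card (n : ℕ) (hn : 1 ≤ n) :
    Nat.card {P : Finpartition (Finset.univ : Finset (Fin n)) //
        ∀ b ∈ P.parts, ∀ j j' : Fin n, (j' : ℕ) = (j : ℕ) + 1 → j ∈ b → j' ∉ b} =
      Nat.card (Finpartition (Finset.univ : Finset (Fin (n - 1)))) := by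
  obtain ⟨m, rfl⟩ : ∃ m, n = m + 1 := ⟨n - 1, by omega⟩
  have e1 : {P : Finpartition (univ : Finset (Fin (m+1))) //
        ∀ b ∈ P.parts, ∀ j j' : Fin (m+1), (j' : ℕ) = (j : ℕ) + 1 → j ∈ b → j' ∉ b} ≃
      {s : Setoid (Fin (m+1)) //
        ∀ j j' : Fin (m+1), (j' : ℕ) = (j : ℕ) + 1 → ¬ s.r j j'} :=
    (Equiv.subtypeEquiv (partitionSetoidEquiv (Fin (m+1))) fun P => pred_iff_setoid P)
  have e2 : {s : Setoid (Fin (m+1)) //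
        ∀ j j' : Fin (m+1), (j' : ℕ) = (j : ℕ) + 1 → ¬ s.r j j'} ≃
      {x : {w : Fin (m+1) → ℕ // IsRGS w} // AdjFree x.val} :=
    (Equiv.subtypeEquiv (setoidRGSEquiv (m+1)) fun s => pred_iff_rgs s)
  have e3 : {x : {w : Fin (m+1) → ℕ // IsRGS w} // AdjFree x.val} ≃
      {w : Fin (m+1) → ℕ // IsRGS w ∧ AdjFree w} :=
    Equiv.subtypeSubtypeEquivSubtypeInter _ _
  have e5 : {u : Fin m → ℕ // IsRGS u} ≃ Setoid (Fin m) := (setoidRGSEquiv m).symm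
  have e6 : Setoid (Fin m) ≃ Finpartition (univ : Finset (Fin m)) :=
    (partitionSetoidEquiv (Fin m)).symm
  have : m + 1 - 1 = m := rfl
  rw [this]
  exact Nat.card_congr
    (e1.trans (e2.trans (e3.trans ((rgsStepEquiv m).trans (e5.trans e6)))))

end Final
end

section
/- In the Weyl algebra with [D,X]=1, the normal form of (X²D)^n is (X²D)^n = ∑_{k=1}^{n} (n!/k!) · C(n-1, k-1) · X^{n+k} D^k, the coefficients being the (unsigned) Lah numbers. -/
lemma Xop_pow_apply (m : ℕ) (p : Polynomial ℝ) :
    (Xop ^ m) p = Polynomial.X ^ m * p := by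
  induction m with
  | zero => simp
  | succ m ih =>
    rw [pow_succ', Module.End.mul_apply, ih, Xop, LinearMap.mulLeft_apply, pow_succ']
    ring

lemma comm_key (m : ℕ) :
    Dop * Xop ^ (m + 1) = Xop ^ (m + 1) * Dop + ((m + 1 : ℕ) : ℝ) • Xop ^ m := by
  apply LinearMap.ext
  intro p
  simp only [Module.End.mul_apply, LinearMap.add_apply, LinearMap.smul_apply,
    Xop_pow_apply]
  show Polynomial.derivative _ = Polynomial.X ^ (m+1) * Polynomial.derivative p + _
  rw [Polynomial.derivative_mul, Polynomial.derivative_X_pow]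
  simp [Polynomial.smul_eq_C_mul]
  ring

/-- The Lah-type coefficient. -/
noncomputable def lahC (n k : ℕ) : ℝ :=
  ((Nat.factorial n : ℝ) / (Nat.factorial k : ℝ)) * (Nat.choose (n - 1) (k - 1) : ℝ)

lemma nat_rec_id (m i : ℕ) (h : i + 1 ≤ m) :
    (m + 2) * Nat.choose (m + 1) (i + 1)
      = (i + 2) * Nat.choose m i + (m + i + 3) * Nat.choose m (i + 1) := by
  have h1 : Nat.choose m (i + 1) * (i + 1) = Nat.choose m i * (m - i) :=
    Nat.choose_succ_right_eq m i
  rw [Nat.choose_succ_succ]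
  zify [le_trans (Nat.le_succ i) h] at h1 ⊢
  linarith [h1]

lemma coeff_rec (n j : ℕ) (hn : 1 ≤ n) (h1 : 1 ≤ j) (h2 : j ≤ n + 1) :
    lahC (n + 1) j
      = (if 2 ≤ j then lahC n (j - 1) else 0)
        + (if j ≤ n then ((n : ℝ) + (j : ℝ)) * lahC n j else 0) := by
  obtain ⟨m, rfl⟩ : ∃ m, n = m + 1 := ⟨n - 1, by omega⟩
  unfold lahC
  rcases Nat.lt_or_ge j 2 with hj | hj
  · -- j = 1
    obtain rfl : j = 1 := by omega
    simp [Nat.factorial_succ, Nat.factorial]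
  rcases Nat.lt_or_ge (m + 1) j with hjn | hjn
  · -- j = n + 1 = m + 2
    obtain rfl : j = m + 2 := by omega
    have hno : ¬ (m + 2 ≤ m + 1) := by omega
    rw [if_pos hj, if_neg hno]
    simp only [Nat.add_sub_cancel, show m + 2 - 1 = m + 1 from rfl,
      Nat.choose_self, Nat.cast_one, add_zero, show m + 1 + 1 - 1 = m + 1 from rfl]
    rw [Nat.factorial_succ (m + 1)]
    have hf : (Nat.factorial (m + 1) : ℝ) ≠ 0 := by
      exact_mod_cast Nat.factorial_ne_zero _
    push_cast
    field_simp
  · -- 2 ≤ j ≤ m + 1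
    obtain ⟨i, rfl⟩ : ∃ i, j = i + 2 := ⟨j - 2, by omega⟩
    have hi : i + 1 ≤ m := by omega
    rw [if_pos hj, if_pos hjn]
    simp only [show m + 1 + 1 - 1 = m + 1 from rfl, show i + 2 - 1 = i + 1 from rfl,
      Nat.add_sub_cancel, show m + 1 - 1 = m from rfl, show i + 1 - 1 = i from rfl]
    have key := nat_rec_id m i hi
    have hfk1 : (Nat.factorial (i + 1) : ℝ) ≠ 0 := by exact_mod_cast Nat.factorial_ne_zero _
    have hi2 : ((i : ℝ) + 2) ≠ 0 := by positivity
    have e1 : (Nat.factorial (m + 2) : ℝ) = (m + 2) * Nat.factorial (m + 1) := by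
      rw [Nat.factorial_succ]; push_cast; ring
    have e2 : (Nat.factorial (i + 2) : ℝ) = (i + 2) * Nat.factorial (i + 1) := by
      rw [Nat.factorial_succ]; push_cast; ring
    have keyR : ((m : ℝ) + 2) * (Nat.choose (m + 1) (i + 1) : ℝ)
        = ((i : ℝ) + 2) * (Nat.choose m i : ℝ)
          + ((m : ℝ) + (i : ℝ) + 3) * (Nat.choose m (i + 1) : ℝ) := by
      exact_mod_cast key
    have main : ((m : ℝ) + 2) * (Nat.factorial (m + 1) : ℝ) * (Nat.choose (m + 1) (i + 1) : ℝ)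
        = ((i : ℝ) + 2) * (Nat.factorial (m + 1) : ℝ) * (Nat.choose m i : ℝ)
          + ((m : ℝ) + (i : ℝ) + 3) * ((Nat.factorial (m + 1) : ℝ) * (Nat.choose m (i + 1) : ℝ)) := by
      linear_combination (Nat.factorial (m + 1) : ℝ) * keyR
    rw [show m + 1 + 1 = m + 2 from rfl, e1, e2]
    push_cast
    set F : ℝ := (Nat.factorial (m + 1) : ℝ)
    set f : ℝ := (Nat.factorial (i + 1) : ℝ)
    calc ((m:ℝ) + 2) * F / (((i:ℝ) + 2) * f) * (Nat.choose (m + 1) (i + 1) : ℝ)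
        = (((m:ℝ) + 2) * F * (Nat.choose (m + 1) (i + 1) : ℝ)) / (((i:ℝ) + 2) * f) := by ring
      _ = (((i : ℝ) + 2) * F * (Nat.choose m i : ℝ)
            + ((m : ℝ) + (i : ℝ) + 3) * (F * (Nat.choose m (i + 1) : ℝ))) / (((i:ℝ) + 2) * f) := by
          rw [main]
      _ = F / f * (Nat.choose m i : ℝ)
            + ((m:ℝ) + 1 + ((i:ℝ) + 2)) * (F / (((i:ℝ) + 2) * f) * (Nat.choose m (i + 1) : ℝ)) := by
          rw [add_div]
          congr 1
          · field_simp
          · ring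

/-- **Normal form of `(X²D)^n` via Lah numbers.** As operators on `ℝ[x]`, for `n ≥ 1`:
`(X²D)^n = ∑_{k=1}^{n} (n!/k!) C(n-1,k-1) X^{n+k} D^k`. -/
theorem normal_form_X2D_pow (n : ℕ) (hn : 1 ≤ n) :
    (Xop ^ 2 * Dop) ^ n =
      ∑ k ∈ Finset.Icc 1 n,
        (((Nat.factorial n : ℝ) / (Nat.factorial k : ℝ)) * (Nat.choose (n - 1) (k - 1) : ℝ)) •
          (Xop ^ (n + k) * Dop ^ k) := by
  induction n, hn using Nat.le_induction with
  | base =>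
    simp [Nat.factorial]
  | succ n hn ih =>
    have step : ∀ k, 1 ≤ k → k ≤ n →
        (Xop ^ 2 * Dop) * (Xop ^ (n + k) * Dop ^ k)
          = Xop ^ (n + 1 + (k + 1)) * Dop ^ (k + 1)
            + ((n : ℝ) + (k : ℝ)) • (Xop ^ (n + 1 + k) * Dop ^ k) := by
      intro k hk1 hk2
      obtain ⟨m, hm⟩ : ∃ m, n + k = m + 1 := ⟨n + k - 1, by omega⟩
      have hcast : ((m + 1 : ℕ) : ℝ) = (n : ℝ) + (k : ℝ) := by
        have : ((n + k : ℕ) : ℝ) = ((m + 1 : ℕ) : ℝ) := by rw [hm]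
        push_cast at this ⊢
        linarith
      have h2 : Xop ^ 2 * Dop * (Xop ^ (n + k) * Dop ^ k)
          = Xop ^ 2 * (Dop * Xop ^ (n + k)) * Dop ^ k := by
        noncomm_ring
      rw [h2, hm, comm_key m, hcast, mul_add, add_mul]
      congr 1
      · rw [show n + 1 + (k + 1) = 2 + (m + 1) from by omega, pow_add Xop 2 (m + 1),
          pow_succ' Dop k]
        noncomm_ring
      · rw [mul_smul_comm, smul_mul_assoc]
        congr 1
        rw [show n + 1 + k = 2 + m from by omega, pow_add Xop 2 m]
    have lhs_eq : (Xop ^ 2 * Dop) ^ (n + 1)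
        = ∑ k ∈ Finset.Icc 1 n, lahC n k •
            (Xop ^ (n + 1 + (k + 1)) * Dop ^ (k + 1))
          + ∑ k ∈ Finset.Icc 1 n, (((n : ℝ) + (k : ℝ)) * lahC n k) •
            (Xop ^ (n + 1 + k) * Dop ^ k) := by
      rw [pow_succ', ih, Finset.mul_sum, ← Finset.sum_add_distrib]
      refine Finset.sum_congr rfl fun k hk => ?_
      rw [Finset.mem_Icc] at hk
      rw [mul_smul_comm, step k hk.1 hk.2, smul_add, smul_smul]
      simp only [lahC]
      rw [mul_comm (((n : ℝ) + (k : ℝ)))]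
    rw [lhs_eq]
    show _ = ∑ k ∈ Finset.Icc 1 (n + 1), lahC (n + 1) k • (Xop ^ (n + 1 + k) * Dop ^ k)
    have rhs_eq : ∑ k ∈ Finset.Icc 1 (n + 1), lahC (n + 1) k • (Xop ^ (n + 1 + k) * Dop ^ k)
        = ∑ j ∈ Finset.Icc 1 (n + 1),
            ((if 2 ≤ j then lahC n (j - 1) • (Xop ^ (n + 1 + j) * Dop ^ j) else 0)
              + (if j ≤ n then (((n : ℝ) + (j : ℝ)) * lahC n j) • (Xop ^ (n + 1 + j) * Dop ^ j)
                  else 0)) := by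
      refine Finset.sum_congr rfl fun j hj => ?_
      rw [Finset.mem_Icc] at hj
      rw [coeff_rec n j hn hj.1 hj.2, add_smul]
      congr 1 <;> split <;> simp
    rw [rhs_eq, Finset.sum_add_distrib]
    congr 1
    · rw [← Finset.sum_filter]
      have hf : (Finset.Icc 1 (n + 1)).filter (fun j => 2 ≤ j) = Finset.Icc 2 (n + 1) := by
        ext x; simp only [Finset.mem_filter, Finset.mem_Icc]; omega
      rw [hf, show Finset.Icc 2 (n + 1) = (Finset.Icc 1 n).map (addRightEmbedding 1) from by
            rw [Finset.map_add_right_Icc], Finset.sum_map]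
      refine Finset.sum_congr rfl fun k hk => ?_
      simp [addRightEmbedding]
    · rw [← Finset.sum_filter]
      have hf : (Finset.Icc 1 (n + 1)).filter (fun j => j ≤ n) = Finset.Icc 1 n := by
        ext x; simp only [Finset.mem_filter, Finset.mem_Icc]; omega
      rw [hf]
end
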